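/- arXiv:1501.05083 — 4 statements merged into one kernel-verified Lean document; each statement's English description precedes it below -/
import Mathlib

section
/- Let I be an ideal of ℂ[x_1,...,x_n], ξ ∈ ℂ^n, and Q the m_ξ-primary component of I (where m_ξ is the maximal ideal of polynomials vanishing at ξ). Then the orthogonal complement Q^⊥ of Q in the dual space equals the intersection of I^⊥ with the space of polynomial differential operators at ξ (i.e., finite ℂ-linear combinations of operators ∂^β_ξ : p ↦ ∂^β(p)(ξ)). -/
open MvPolynomial

/-- Iterated partial derivative `∂^β` on multivariate polynomials. -/
noncomputable def pd {n : ℕ} {K : Type*} [CommSemiring K] (β : Fin n → ℕ) :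
    Module.End K (MvPolynomial (Fin n) K) :=
  (List.ofFn fun i : Fin n =>
    ((MvPolynomial.pderiv i).toLinearMap : Module.End K (MvPolynomial (Fin n) K)) ^ (β i)).prod

/-- The linear functional `∂^β_ξ : p ↦ ∂^β(p)(ξ)`. -/
noncomputable def diffAt {n : ℕ} (ξ : Fin n → ℂ) (β : Fin n → ℕ) :
    Module.Dual ℂ (MvPolynomial (Fin n) ℂ) :=
  (MvPolynomial.aeval ξ).toLinearMap.comp (pd β)

/-- The space `ℂ[∂_ξ]` of polynomial differential operators at `ξ`:
finite `ℂ`-linear combinations of the functionals `∂^β_ξ`. -/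
noncomputable def polyDiffOps {n : ℕ} (ξ : Fin n → ℂ) :
    Submodule ℂ (Module.Dual ℂ (MvPolynomial (Fin n) ℂ)) :=
  Submodule.span ℂ (Set.range fun β : Fin n → ℕ => diffAt ξ β)

/-- The orthogonal complement `J^⊥ = {Λ : Λ(p) = 0 ∀ p ∈ J}` of an ideal in the dual space. -/
noncomputable def perp {n : ℕ} (J : Ideal (MvPolynomial (Fin n) ℂ)) :
    Submodule ℂ (Module.Dual ℂ (MvPolynomial (Fin n) ℂ)) :=
  (J.restrictScalars ℂ).dualAnnihilator

variable {n : ℕ}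

lemma aeval_eq (ξ : Fin n → ℂ) (p : MvPolynomial (Fin n) ℂ) : aeval ξ p = eval ξ p := by
  rw [← coe_aeval_eq_eval]; rfl

lemma pderiv_pow_monomial (i : Fin n) (b : ℕ) (s : Fin n →₀ ℕ) (a : ℂ) :
    (((MvPolynomial.pderiv i).toLinearMap : Module.End ℂ (MvPolynomial (Fin n) ℂ)) ^ b)
        (monomial s a)
      = monomial (s - Finsupp.single i b) (a * (s i).descFactorial b) := by
  induction b generalizing s a with
  | zero => simp
  | succ b ih =>
      rw [pow_succ, Module.End.mul_apply]
      rw [show ((pderiv i).toLinearMap : Module.End ℂ (MvPolynomial (Fin n) ℂ)) (monomial s a)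
          = (pderiv i) (monomial s a) from rfl, pderiv_monomial, ih]
      congr 1
      · rw [tsub_tsub, ← Finsupp.single_add, add_comm 1 b]
      · rw [Finsupp.tsub_apply, Finsupp.single_eq_same]
        cases h : s i with
        | zero => simp
        | succ m =>
            simp only [Nat.succ_sub_one, Nat.succ_descFactorial_succ]
            push_cast; ring

lemma listProd_pows_monomial (m : ℕ) (f : Fin m → Fin n) (hf : Function.Injective f)
    (β : Fin n → ℕ) (s : Fin n →₀ ℕ) (a : ℂ) :
    (List.ofFn fun j : Fin m =>
        ((MvPolynomial.pderiv (f j)).toLinearMap : Module.End ℂ (MvPolynomial (Fin n) ℂ))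
          ^ (β (f j))).prod (monomial s a)
      = monomial (s - ∑ j : Fin m, Finsupp.single (f j) (β (f j)))
          (a * ∏ j : Fin m, ((s (f j)).descFactorial (β (f j)) : ℂ)) := by
  induction m generalizing s a with
  | zero => simp
  | succ m ih =>
      have hih := ih (f ∘ Fin.succ) (hf.comp (Fin.succ_injective m)) s a
      simp only [Function.comp] at hih
      rw [List.ofFn_succ, List.prod_cons, Module.End.mul_apply, hih, pderiv_pow_monomial]
      have hT : (∑ j : Fin m, Finsupp.single (f j.succ) (β (f j.succ))) (f 0) = 0 := by
        rw [Finsupp.finset_sum_apply]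
        refine Finset.sum_eq_zero fun j _ => ?_
        rw [Finsupp.single_apply, if_neg]
        exact fun h => (Fin.succ_ne_zero j) (hf h)
      congr 1
      · rw [Fin.sum_univ_succ, tsub_tsub, add_comm]
      · rw [Fin.prod_univ_succ, Finsupp.tsub_apply, hT, Nat.sub_zero]
        push_cast
        ring

lemma pd_monomial (β : Fin n → ℕ) (s : Fin n →₀ ℕ) (a : ℂ) :
    pd β (monomial s a)
      = monomial (s - ∑ j : Fin n, Finsupp.single j (β j))
          (a * ∏ j : Fin n, ((s j).descFactorial (β j) : ℂ)) := by
  have := listProd_pows_monomial n (id : Fin n → Fin n) Function.injective_id β s a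
  simpa [pd] using this

lemma diffAt_apply (ξ : Fin n → ℂ) (β : Fin n → ℕ) (p : MvPolynomial (Fin n) ℂ) :
    diffAt ξ β p = aeval ξ (pd β p) := rfl

lemma sum_single_apply (β : Fin n → ℕ) (j : Fin n) :
    (∑ i : Fin n, Finsupp.single i (β i)) j = β j := by
  rw [Finsupp.finset_sum_apply, Finset.sum_eq_single j]
  · simp
  · intro i _ hij; rw [Finsupp.single_apply, if_neg hij]
  · simp

lemma aeval_zero_monomial (s : Fin n →₀ ℕ) (a : ℂ) :
    aeval (0 : Fin n → ℂ) (monomial s a) = if s = 0 then a else 0 := by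
  rcases eq_or_ne s 0 with h | h
  · simp [h]
  · rw [if_neg h, aeval_monomial]
    obtain ⟨j, hj⟩ : ∃ j, s j ≠ 0 := by
      by_contra hc
      push_neg at hc
      exact h (Finsupp.ext hc)
    rw [Finsupp.prod]
    have : ∏ i ∈ s.support, ((0 : Fin n → ℂ) i) ^ s i = 0 := by
      apply Finset.prod_eq_zero (Finsupp.mem_support_iff.mpr hj)
      simp [zero_pow hj]
    rw [this, mul_zero]

lemma diffAt_zero_monomial_ne (β : Fin n → ℕ) (s : Fin n →₀ ℕ) (h : ⇑s ≠ β) :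
    diffAt (0 : Fin n → ℂ) β (monomial s 1) = 0 := by
  rw [diffAt_apply, pd_monomial, aeval_zero_monomial]
  obtain ⟨j, hj⟩ : ∃ j, s j ≠ β j := by
    by_contra hc; push_neg at hc; exact h (funext hc)
  rcases lt_or_gt_of_ne hj with hlt | hgt
  · have hz : (1 : ℂ) * ∏ i : Fin n, ((s i).descFactorial (β i) : ℂ) = 0 := by
      rw [one_mul]
      apply Finset.prod_eq_zero (Finset.mem_univ j)
      exact_mod_cast Nat.descFactorial_eq_zero_iff_lt.mpr hlt
    rw [hz, ite_self]
  · rw [if_neg]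
    intro hc
    have := congrFun (congrArg DFunLike.coe hc) j
    simp only [Finsupp.tsub_apply, Finsupp.coe_zero, Pi.zero_apply, sum_single_apply] at this
    omega

lemma diffAt_zero_monomial_eq (β : Fin n → ℕ) (s : Fin n →₀ ℕ) (h : ⇑s = β) :
    diffAt (0 : Fin n → ℂ) β (monomial s 1) = ∏ i : Fin n, ((β i).factorial : ℂ) := by
  rw [diffAt_apply, pd_monomial, aeval_zero_monomial, if_pos, one_mul]
  · refine Finset.prod_congr rfl fun i _ => ?_
    rw [show s i = β i from congrFun h i, Nat.descFactorial_self]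
  · ext i
    simp only [Finsupp.tsub_apply, Finsupp.coe_zero, Pi.zero_apply, sum_single_apply,
      show s i = β i from congrFun h i]
    omega

noncomputable def shiftS (ξ : Fin n → ℂ) :
    MvPolynomial (Fin n) ℂ →ₐ[ℂ] MvPolynomial (Fin n) ℂ :=
  aeval (fun j => X j - C (ξ j))

lemma pderiv_shiftS (ξ : Fin n → ℂ) (i : Fin n) (p : MvPolynomial (Fin n) ℂ) :
    pderiv i (shiftS ξ p) = shiftS ξ (pderiv i p) := by
  induction p using MvPolynomial.induction_on with
  | C a => simp [shiftS]
  | add p q hp hq => simp [map_add, hp, hq]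
  | mul_X p j hp =>
      have hX : shiftS ξ (X j) = X j - C (ξ j) := by simp [shiftS]
      have hpX : shiftS ξ ((pderiv i) (X j)) = pderiv i (X j) := by
        rcases eq_or_ne i j with rfl | hne
        · simp [pderiv_X_self]
        · simp [pderiv_X, Pi.single_apply, hne]
      rw [map_mul, hX, pderiv_mul, pderiv_mul, map_add, map_mul, map_mul, hp, hX, hpX,
        map_sub, pderiv_C, sub_zero]

lemma pow_comm_apply (f : Module.End ℂ (MvPolynomial (Fin n) ℂ))
    (D : Module.End ℂ (MvPolynomial (Fin n) ℂ))
    (h : ∀ q, D (f q) = f (D q)) (b : ℕ) (p : MvPolynomial (Fin n) ℂ) :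
    (D ^ b) (f p) = f ((D ^ b) p) := by
  induction b generalizing p with
  | zero => simp
  | succ b ih => rw [pow_succ, Module.End.mul_apply, Module.End.mul_apply, h, ih]

lemma listprod_comm (f : Module.End ℂ (MvPolynomial (Fin n) ℂ))
    (L : List (Module.End ℂ (MvPolynomial (Fin n) ℂ)))
    (h : ∀ D ∈ L, ∀ q, D (f q) = f (D q)) (p : MvPolynomial (Fin n) ℂ) :
    L.prod (f p) = f (L.prod p) := by
  induction L generalizing p with
  | nil => simp
  | cons D L ih =>
      rw [List.prod_cons, Module.End.mul_apply, Module.End.mul_apply,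
        ih (fun E hE q => h E (List.mem_cons_of_mem D hE) q),
        h D (List.mem_cons_self (a := D) (l := L))]

lemma pd_shiftS (ξ : Fin n → ℂ) (β : Fin n → ℕ) (p : MvPolynomial (Fin n) ℂ) :
    pd β (shiftS ξ p) = shiftS ξ (pd β p) := by
  have key := listprod_comm (shiftS ξ).toLinearMap
    (List.ofFn fun i : Fin n =>
      ((MvPolynomial.pderiv i).toLinearMap : Module.End ℂ (MvPolynomial (Fin n) ℂ)) ^ (β i))
    ?_ p
  · exact key
  · intro D hD q
    obtain ⟨i, rfl⟩ := List.mem_ofFn.mp hD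
    exact pow_comm_apply _ _ (fun q => pderiv_shiftS ξ i q) (β i) q

lemma aeval_shiftS (ξ : Fin n → ℂ) (p : MvPolynomial (Fin n) ℂ) :
    aeval ξ (shiftS ξ p) = aeval (0 : Fin n → ℂ) p := by
  rw [show aeval ξ (shiftS ξ p)
      = ((aeval ξ).comp (aeval fun j => X j - C (ξ j))) p from rfl, comp_aeval]
  have h0 : (fun j => aeval ξ (X j - C (ξ j))) = (0 : Fin n → ℂ) := by
    funext j; simp
  rw [h0]

lemma diffAt_shiftS (ξ : Fin n → ℂ) (β : Fin n → ℕ) (p : MvPolynomial (Fin n) ℂ) :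
    diffAt ξ β (shiftS ξ p) = diffAt (0 : Fin n → ℂ) β p := by
  rw [diffAt_apply, pd_shiftS, diffAt_apply]
  exact aeval_shiftS ξ (pd β p)

lemma shiftS_surjective (ξ : Fin n → ℂ) : Function.Surjective (shiftS ξ) := by
  intro p
  refine ⟨aeval (fun j => X j + C (ξ j)) p, ?_⟩
  rw [show shiftS ξ (aeval (fun j => X j + C (ξ j)) p)
      = ((shiftS ξ).comp (aeval fun j => X j + C (ξ j))) p from rfl, comp_aeval]
  have : (fun j => shiftS ξ (X j + C (ξ j))) = (X : Fin n → MvPolynomial (Fin n) ℂ) := by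
    funext j
    simp [shiftS]
  rw [this, aeval_X_left_apply]

lemma listmap_prod_mul (f q : MvPolynomial (Fin n) ℂ) (L : List (Fin n)) (k : ℕ)
    (h : L.length ≤ k) :
    ∃ r, (L.map fun i =>
        ((pderiv i).toLinearMap : Module.End ℂ (MvPolynomial (Fin n) ℂ))).prod (f ^ k * q)
      = f ^ (k - L.length) * r := by
  induction L with
  | nil => exact ⟨q, by simp⟩
  | cons i L ih =>
      have hlen : L.length + 1 ≤ k := by simpa using h
      obtain ⟨r, hr⟩ := ih (by omega)
      refine ⟨f * (pderiv i) r
        + ((k - L.length : ℕ) : MvPolynomial (Fin n) ℂ) * ((pderiv i) f * r), ?_⟩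
      rw [List.map_cons, List.prod_cons, Module.End.mul_apply, hr]
      rw [show (((pderiv i).toLinearMap : Module.End ℂ (MvPolynomial (Fin n) ℂ)))
          (f ^ (k - L.length) * r) = (pderiv i) (f ^ (k - L.length) * r) from rfl]
      rw [pderiv_mul, Derivation.leibniz_pow]
      have h2 : k - (i :: L).length = (k - L.length) - 1 := by
        simp only [List.length_cons]
        omega
      rw [h2]
      have hm : f ^ (k - L.length) = f ^ (k - L.length - 1) * f := by
        rw [← pow_succ]
        congr 1
        omega
      rw [hm]
      simp only [smul_eq_mul, nsmul_eq_mul]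
      ring


lemma pd_eq_listmap (β : Fin n → ℕ) :
    pd (K := ℂ) β = ((List.ofFn fun i : Fin n => List.replicate (β i) i).flatten.map
        fun i => ((pderiv i).toLinearMap : Module.End ℂ (MvPolynomial (Fin n) ℂ))).prod := by
  rw [List.map_flatten, List.prod_flatten, List.map_ofFn, List.map_ofFn, pd]
  congr 1
  apply congrArg List.ofFn
  funext i
  simp [List.map_replicate, List.prod_replicate, Function.comp]

lemma flatten_length (β : Fin n → ℕ) :
    (List.ofFn fun i : Fin n => List.replicate (β i) i).flatten.length = ∑ i, β i := by
  rw [List.length_flatten, List.map_ofFn]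
  rw [List.sum_ofFn]
  simp [Function.comp]

lemma diffAt_pow_mul_eq_zero (ξ : Fin n → ℂ) (β : Fin n → ℕ)
    (f q : MvPolynomial (Fin n) ℂ) (hf : eval ξ f = 0) (k : ℕ) (hk : ∑ i, β i < k) :
    diffAt ξ β (f ^ k * q) = 0 := by
  set L := (List.ofFn fun i : Fin n => List.replicate (β i) i).flatten with hL
  have hlen : L.length = ∑ i, β i := flatten_length β
  obtain ⟨r, hr⟩ := listmap_prod_mul f q L k (by omega)
  rw [diffAt_apply, pd_eq_listmap, ← hL, hr, map_mul, map_pow, aeval_eq, hf, zero_pow, zero_mul]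
  omega


/-- If `Q` is the `m_ξ`-primary component of `I`, then `Q^⊥ = I^⊥ ∩ ℂ[∂_ξ]`. -/
theorem perp_primary_component {n : ℕ} (ξ : Fin n → ℂ)
    (I Q : Ideal (MvPolynomial (Fin n) ℂ))
    (hprim : Q.IsPrimary)
    (hrad : Q.radical = RingHom.ker (MvPolynomial.eval ξ))
    (hQ : ∀ q, q ∈ Q ↔ ∃ p, MvPolynomial.eval ξ p ≠ 0 ∧ p * q ∈ I) :
    perp Q = perp I ⊓ polyDiffOps ξ := by
  classical
  have hIQ : I ≤ Q := fun q hq => (hQ q).mpr ⟨1, by simp, by simpa using hq⟩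
  apply le_antisymm
  · intro Λ hΛ
    have hΛQ : ∀ p ∈ Q, Λ p = 0 := fun p hp =>
      (Submodule.mem_dualAnnihilator Λ).mp hΛ p hp
    refine ⟨(Submodule.mem_dualAnnihilator Λ).mpr fun p hp => hΛQ p (hIQ hp), ?_⟩
    -- Q^⊥ ⊆ ℂ[∂_ξ]
    obtain ⟨N, hN⟩ := Ideal.exists_radical_pow_le_of_fg Q (IsNoetherian.noetherian _)
    rw [hrad] at hN
    set Y : (Fin n →₀ ℕ) → MvPolynomial (Fin n) ℂ :=
      fun s => shiftS ξ (monomial s 1) with hY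
    set B : Finset (Fin n → ℕ) := Fintype.piFinset fun _ : Fin n => Finset.range N with hB
    set Λ' : Module.Dual ℂ (MvPolynomial (Fin n) ℂ) :=
      ∑ β ∈ B, (Λ (Y (Finsupp.equivFunOnFinite.symm β)) / ∏ i, ((β i).factorial : ℂ))
        • diffAt ξ β with hΛ'
    have hmem : Λ' ∈ polyDiffOps ξ := Submodule.sum_mem _ fun β _ =>
      Submodule.smul_mem _ _ (Submodule.subset_span ⟨β, rfl⟩)
    have hfacne : ∀ β : Fin n → ℕ, (∏ i, ((β i).factorial : ℂ)) ≠ 0 := by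
      intro β
      apply Finset.prod_ne_zero_iff.mpr
      intro i _
      exact_mod_cast (β i).factorial_ne_zero
    have key : ∀ s : Fin n →₀ ℕ, Λ (Y s) = Λ' (Y s) := by
      intro s
      have hYd : ∀ β, diffAt ξ β (Y s) = diffAt (0 : Fin n → ℂ) β (monomial s 1) :=
        fun β => diffAt_shiftS ξ β (monomial s 1)
      rw [hΛ']
      simp only [LinearMap.sum_apply, LinearMap.smul_apply, smul_eq_mul]
      by_cases hs : ∀ i, s i < N
      · rw [Finset.sum_eq_single (⇑s : Fin n → ℕ)]
        · rw [hYd, diffAt_zero_monomial_eq _ _ rfl, Finsupp.equivFunOnFinite_symm_coe,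
            div_mul_cancel₀ _ (hfacne ⇑s)]
        · intro β _ hβne
          rw [hYd, diffAt_zero_monomial_ne β s (fun h => hβne h.symm), mul_zero]
        · intro hnotmem
          exact absurd (Fintype.mem_piFinset.mpr fun i => Finset.mem_range.mpr (hs i)) hnotmem
      · push_neg at hs
        obtain ⟨i, hi⟩ := hs
        have hrhs : ∀ β ∈ B, ⇑s ≠ β := by
          intro β hβ h
          have : β i < N := Finset.mem_range.mp (Fintype.mem_piFinset.mp hβ i)
          rw [← h] at this
          omega
        rw [Finset.sum_eq_zero fun β hβ => by
          rw [hYd, diffAt_zero_monomial_ne β s (hrhs β hβ), mul_zero]]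
        -- LHS : Λ (Y s) = 0
        set m0 : Ideal (MvPolynomial (Fin n) ℂ) := RingHom.ker (eval (0 : Fin n → ℂ)) with hm0
        have h1 : monomial s (1 : ℂ) = X i ^ (s i) * monomial (s.erase i) 1 := by
          rw [X_pow_eq_monomial, monomial_mul, one_mul, Finsupp.single_add_erase]
        have hXi : (X i : MvPolynomial (Fin n) ℂ) ∈ m0 := by
          rw [hm0, RingHom.mem_ker, eval_X]
          rfl
        have hmon : monomial s (1 : ℂ) ∈ m0 ^ N := by
          rw [h1]
          exact Ideal.mul_mem_right _ _
            (Ideal.pow_le_pow_right hi (Ideal.pow_mem_pow hXi (s i)))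
        have hmap : Ideal.map (shiftS ξ) m0 ≤ RingHom.ker (MvPolynomial.eval ξ) := by
          rw [Ideal.map_le_iff_le_comap]
          intro x hx
          rw [hm0, RingHom.mem_ker] at hx
          rw [Ideal.mem_comap, RingHom.mem_ker]
          rw [← aeval_eq, aeval_shiftS, aeval_eq, hx]
        have hYQ : Y s ∈ Q := by
          apply hN
          have : Y s ∈ Ideal.map (shiftS ξ) (m0 ^ N) := Ideal.mem_map_of_mem _ hmon
          rw [Ideal.map_pow] at this
          exact Ideal.pow_right_mono hmap N this
        rw [hΛQ _ hYQ]
    have hEq : Λ = Λ' := by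
      apply LinearMap.ext
      intro p
      obtain ⟨r, rfl⟩ := shiftS_surjective ξ p
      induction r using MvPolynomial.induction_on' with
      | monomial s a =>
          have : monomial s a = a • monomial s 1 := by
            rw [smul_monomial, smul_eq_mul, mul_one]
          rw [this, map_smul, map_smul, map_smul, key s]
      | add p q hp hq => rw [map_add, map_add, map_add, hp, hq]
    rw [hEq]
    exact hmem
  · rintro Λ ⟨hΛI, hΛD⟩
    have hI0 : ∀ p ∈ I, Λ p = 0 := fun p hp =>
      (Submodule.mem_dualAnnihilator Λ).mp hΛI p hp
    refine (Submodule.mem_dualAnnihilator Λ).mpr fun q hq => ?_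
    obtain ⟨c, hc⟩ := Finsupp.mem_span_range_iff_exists_finsupp.mp hΛD
    obtain ⟨p, hp0, hpI⟩ := (hQ q).mp hq
    set p₁ : MvPolynomial (Fin n) ℂ := C (eval ξ p)⁻¹ * p with hp₁
    have hep1 : eval ξ p₁ = 1 := by
      rw [hp₁, map_mul, eval_C, inv_mul_cancel₀ hp0]
    have hp₁I : p₁ * q ∈ I := by
      rw [hp₁, mul_assoc]
      exact Ideal.mul_mem_left _ _ hpI
    set f : MvPolynomial (Fin n) ℂ := 1 - p₁ with hf'
    have hf : eval ξ f = 0 := by rw [hf', map_sub, map_one, hep1, sub_self]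
    set d : ℕ := c.support.sup fun β => ∑ i, β i with hd
    have hgs : (∑ j ∈ Finset.range (d+1), f ^ j) * p₁ = 1 - f ^ (d+1) := by
      have h2 : p₁ = 1 - f := by rw [hf']; ring
      rw [h2]
      linear_combination -geom_sum_mul f (d+1)
    have hqid : q = (∑ j ∈ Finset.range (d+1), f ^ j) * (p₁ * q) + f ^ (d+1) * q := by
      calc q = ((∑ j ∈ Finset.range (d+1), f ^ j) * p₁) * q + f ^ (d+1) * q := by
              rw [hgs]; ring
        _ = _ := by ring
    rw [hqid, map_add, hI0 _ (Ideal.mul_mem_left _ _ hp₁I), zero_add]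
    rw [← hc]
    rw [Finsupp.sum]
    simp only [LinearMap.sum_apply, LinearMap.smul_apply, smul_eq_mul]
    apply Finset.sum_eq_zero
    intro β hβ
    have hle : (∑ i, β i) ≤ d := by
      rw [hd]
      exact Finset.le_sup hβ
    have hz : diffAt ξ β (f ^ (d+1) * q) = 0 :=
      diffAt_pow_mul_eq_zero ξ β f q hf (d+1) (lt_of_le_of_lt hle (Nat.lt_succ_self d))
    rw [hz, mul_zero]
end

section
/- Let Q be an m_ξ-primary ideal of ℂ[x_1,...,x_n] with multiplicity δ = dim ℂ[x]/Q. Then there exists a set E = {α_1,...,α_δ} ⊂ ℕ^n of exponents, connected to 1 and with α_1 = 0, such that B = {(x−ξ)^{α_1},...,(x−ξ)^{α_δ}} is a basis of ℂ[x]/Q, and there exists a unique dual basis Λ_0,...,Λ_{δ−1} of Q^⊥ with Λ_j = (1/α_{j+1}!)∂^{α_{j+1}}_ξ + Σ_{|β|≤o, β∉E} ν_{α_{j+1},β} ∂^β_ξ, orthogonal to B in the sense that Λ_i((x−ξ)^{α_{j+1}}) = δ_{ij}. -/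
open MvPolynomial

/-- The shifted monomial `(x−ξ)^α`. -/
noncomputable def xm {n : ℕ} (ξ : Fin n → ℂ) (α : Fin n → ℕ) : MvPolynomial (Fin n) ℂ :=
  ∏ i, (X i - C (ξ i)) ^ (α i)

variable {n : ℕ}

lemma pderiv_fac_self (i : Fin n) (c : ℂ) (g : ℕ) :
    pderiv i ((X i - C c) ^ g) = g • (X i - C c) ^ (g - 1) := by
  rw [Derivation.leibniz_pow]
  simp [pderiv_X]

lemma pderiv_fac_ne (i j : Fin n) (hij : j ≠ i) (c : ℂ) (g : ℕ) :
    pderiv j ((X i - C c) ^ g) = 0 := by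
  rw [Derivation.leibniz_pow]
  simp [pderiv_X, hij]

lemma pow_pderiv_fac (i : Fin n) (c : ℂ) (g b : ℕ) :
    (((pderiv i).toLinearMap : Module.End ℂ (MvPolynomial (Fin n) ℂ)) ^ b) ((X i - C c) ^ g)
      = (g.descFactorial b : ℂ) • (X i - C c) ^ (g - b) := by
  induction b with
  | zero => simp
  | succ b ih =>
    rw [pow_succ', Module.End.mul_apply, ih, map_smul]
    show (g.descFactorial b : ℂ) • pderiv i ((X i - C c) ^ (g - b)) = _
    rw [pderiv_fac_self, Nat.descFactorial_succ, Nat.sub_sub]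
    rw [smul_comm]
    simp [Nat.cast_mul, mul_smul, Nat.cast_smul_eq_nsmul]

lemma pderiv_pow_mul_of_const (i : Fin n) (b : ℕ) (f g : MvPolynomial (Fin n) ℂ)
    (hg : pderiv i g = 0) :
    (((pderiv i).toLinearMap : Module.End ℂ (MvPolynomial (Fin n) ℂ)) ^ b) (f * g)
      = ((((pderiv i).toLinearMap : Module.End ℂ (MvPolynomial (Fin n) ℂ)) ^ b) f) * g := by
  induction b generalizing f with
  | zero => simp
  | succ b ih =>
    rw [pow_succ, Module.End.mul_apply, Module.End.mul_apply]
    have h1 : ((pderiv i).toLinearMap : Module.End ℂ (MvPolynomial (Fin n) ℂ)) (f * g)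
        = (pderiv i f) * g := by
      show pderiv i (f * g) = _
      rw [Derivation.leibniz, hg]
      simp [smul_eq_mul, mul_comm]
    rw [h1, ih]
    rfl

lemma xm_split (ξ : Fin n → ℂ) (γ : Fin n → ℕ) (i : Fin n) :
    xm ξ γ = (X i - C (ξ i)) ^ (γ i) * ∏ j ∈ Finset.univ.erase i, (X j - C (ξ j)) ^ (γ j) := by
  rw [xm, ← Finset.mul_prod_erase Finset.univ _ (Finset.mem_univ i)]

lemma pderiv_erase_prod (ξ : Fin n → ℂ) (γ : Fin n → ℕ) (i : Fin n) :
    pderiv i (∏ j ∈ Finset.univ.erase i, (X j - C (ξ j)) ^ (γ j)) = 0 := by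
  apply Finset.prod_induction _ (fun p => pderiv i p = 0)
  · intro a b ha hb
    rw [Derivation.leibniz, ha, hb]; simp
  · simp
  · intro j hj
    exact pderiv_fac_ne j i (Ne.symm (Finset.mem_erase.mp hj).1) _ _

lemma pow_pderiv_xm (ξ : Fin n → ℂ) (γ : Fin n → ℕ) (i : Fin n) (b : ℕ) :
    (((pderiv i).toLinearMap : Module.End ℂ (MvPolynomial (Fin n) ℂ)) ^ b) (xm ξ γ)
      = ((γ i).descFactorial b : ℂ) • xm ξ (Function.update γ i (γ i - b)) := by
  rw [xm_split ξ γ i, pderiv_pow_mul_of_const _ _ _ _ (pderiv_erase_prod ξ γ i),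
    pow_pderiv_fac, xm_split ξ (Function.update γ i (γ i - b)) i, Function.update_self]
  rw [smul_mul_assoc]
  congr 1
  congr 1
  exact Finset.prod_congr rfl fun j hj => by
    rw [Function.update_of_ne (Finset.mem_erase.mp hj).1]

lemma pd_xm_list (ξ : Fin n → ℂ) (β : Fin n → ℕ) :
    ∀ (l : List (Fin n)), l.Nodup → ∀ γ : Fin n → ℕ,
    ((l.map fun i => ((pderiv i).toLinearMap : Module.End ℂ (MvPolynomial (Fin n) ℂ)) ^ β i).prod)
        (xm ξ γ)
      = (∏ i ∈ l.toFinset, ((γ i).descFactorial (β i) : ℂ)) •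
          xm ξ (fun j => if j ∈ l then γ j - β j else γ j) := by
  intro l
  induction l with
  | nil => intro _ γ; simp
  | cons i l ih =>
    intro hnd γ
    have hi : i ∉ l := (List.nodup_cons.mp hnd).1
    rw [List.map_cons, List.prod_cons, Module.End.mul_apply, ih (List.nodup_cons.mp hnd).2,
      map_smul, pow_pderiv_xm]
    simp only [if_neg hi]
    rw [smul_smul, List.toFinset_cons, Finset.prod_insert (by simpa using hi), mul_comm]
    congr 1
    congr 1
    funext j
    by_cases hji : j = i
    · subst hji; simp [hi]
    · rw [Function.update_of_ne hji]
      simp [hji, List.mem_cons]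

lemma pd_xm (ξ : Fin n → ℂ) (β γ : Fin n → ℕ) :
    pd β (xm ξ γ)
      = (∏ i, ((γ i).descFactorial (β i) : ℂ)) • xm ξ (fun j => γ j - β j) := by
  rw [pd, List.ofFn_eq_map]
  rw [pd_xm_list ξ β (List.finRange n) (List.nodup_finRange n) γ]
  simp [List.mem_finRange]

lemma aeval_xm (ξ : Fin n → ℂ) (μ : Fin n → ℕ) :
    aeval ξ (xm ξ μ) = if μ = 0 then 1 else 0 := by
  rw [xm, map_prod]
  by_cases h : μ = 0
  · subst h; simp
  · rw [if_neg h]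
    obtain ⟨i, hi⟩ := Function.ne_iff.mp h
    refine Finset.prod_eq_zero (Finset.mem_univ i) ?_
    simp only [map_pow, map_sub, aeval_X, aeval_C, Algebra.algebraMap_self, RingHom.id_apply]
    rw [sub_self]
    exact zero_pow (by simpa using hi)

lemma diffAt_xm (ξ : Fin n → ℂ) (β γ : Fin n → ℕ) :
    diffAt ξ β (xm ξ γ) = if β = γ then (∏ i, ((γ i).factorial : ℂ)) else 0 := by
  rw [diffAt, LinearMap.comp_apply]
  show aeval ξ (pd β (xm ξ γ)) = _
  rw [pd_xm, map_smul, aeval_xm, smul_eq_mul]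
  by_cases h : β = γ
  · subst h
    have h0 : (fun j => β j - β j) = (0 : Fin n → ℕ) := funext fun j => Nat.sub_self (β j)
    rw [h0, if_pos rfl, if_pos rfl, mul_one]
    exact Finset.prod_congr rfl fun i _ => by rw [Nat.descFactorial_self]
  · rw [if_neg h]
    by_cases hle : ∀ i, β i ≤ γ i
    · have : ∃ i, β i < γ i := by
        by_contra hc
        push_neg at hc
        exact h (funext fun i => le_antisymm (hle i) (hc i))
      obtain ⟨i, hi⟩ := this
      rw [if_neg, mul_zero]
      intro hf
      have := congrFun hf i
      simp only [Pi.zero_apply] at this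
      omega
    · push_neg at hle
      obtain ⟨i, hi⟩ := hle
      rw [Finset.prod_eq_zero (Finset.mem_univ i), zero_mul]
      rw [Nat.cast_eq_zero]
      exact Nat.descFactorial_eq_zero_iff_lt.mpr hi

lemma xm_zero (ξ : Fin n → ℂ) : xm ξ 0 = 1 := by simp [xm]

lemma xm_add (ξ : Fin n → ℂ) (γ μ : Fin n → ℕ) : xm ξ (γ + μ) = xm ξ γ * xm ξ μ := by
  simp [xm, pow_add, Finset.prod_mul_distrib]

lemma xm_single (ξ : Fin n → ℂ) (i : Fin n) : xm ξ (Pi.single i 1) = X i - C (ξ i) := by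
  rw [xm, Finset.prod_eq_single i]
  · simp
  · intro j _ hj
    rw [Pi.single_eq_of_ne hj, pow_zero]
  · intro h; exact absurd (Finset.mem_univ i) h

lemma xm_add_single (ξ : Fin n → ℂ) (γ : Fin n → ℕ) (i : Fin n) :
    xm ξ (γ + Pi.single i 1) = xm ξ γ * (X i - C (ξ i)) := by
  rw [xm_add, xm_single]

lemma sub_mem_ker (ξ : Fin n → ℂ) (i : Fin n) :
    (X i - C (ξ i)) ∈ RingHom.ker (MvPolynomial.eval ξ) := by
  simp [RingHom.mem_ker]

lemma xm_mem_pow (ξ : Fin n → ℂ) (γ : Fin n → ℕ) :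
    xm ξ γ ∈ (RingHom.ker (MvPolynomial.eval ξ)) ^ (∑ i, γ i) := by
  have : ∀ s : Finset (Fin n),
      (∏ i ∈ s, (X i - C (ξ i)) ^ (γ i)) ∈ (RingHom.ker (MvPolynomial.eval ξ)) ^ (∑ i ∈ s, γ i) := by
    intro s
    induction s using Finset.induction_on with
    | empty => simp [Ideal.one_eq_top]
    | insert _ _ hnm ih =>
      rw [Finset.prod_insert hnm, Finset.sum_insert hnm, pow_add]
      exact Ideal.mul_mem_mul (Ideal.pow_mem_pow (sub_mem_ker ξ _) _) ih
  exact this Finset.univ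

lemma span_mul_sub (ξ : Fin n → ℂ) (i : Fin n) (p : MvPolynomial (Fin n) ℂ)
    (hp : p ∈ Submodule.span ℂ (Set.range (xm ξ))) :
    p * (X i - C (ξ i)) ∈ Submodule.span ℂ (Set.range (xm ξ)) := by
  induction hp using Submodule.span_induction with
  | mem x hx =>
    obtain ⟨γ, rfl⟩ := hx
    exact Submodule.subset_span ⟨γ + Pi.single i 1, xm_add_single ξ γ i⟩
  | zero => simp
  | add x y _ _ hx hy => rw [add_mul]; exact Submodule.add_mem _ hx hy
  | smul c x _ hx => rw [smul_mul_assoc]; exact Submodule.smul_mem _ c hx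

lemma span_xm (ξ : Fin n → ℂ) : Submodule.span ℂ (Set.range (xm ξ)) = ⊤ := by
  rw [eq_top_iff]
  rintro p -
  induction p using MvPolynomial.induction_on with
  | C a =>
    have : (C a : MvPolynomial (Fin n) ℂ) = a • xm ξ 0 := by
      rw [xm_zero, Algebra.smul_def, mul_one, algebraMap_eq]
    rw [this]
    exact Submodule.smul_mem _ a (Submodule.subset_span ⟨0, rfl⟩)
  | add p q hp hq => exact Submodule.add_mem _ hp hq
  | mul_X p i hp =>
    have : p * X i = p * (X i - C (ξ i)) + ξ i • p := by
      rw [Algebra.smul_def, algebraMap_eq]; ring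
    rw [this]
    exact Submodule.add_mem _ (span_mul_sub ξ i p hp) (Submodule.smul_mem _ _ hp)

section Quot

variable (ξ : Fin n → ℂ) (Q : Ideal (MvPolynomial (Fin n) ℂ))

/-- The quotient map as a `ℂ`-linear map. -/
noncomputable def qmap : MvPolynomial (Fin n) ℂ →ₗ[ℂ] (MvPolynomial (Fin n) ℂ ⧸ Q) :=
  (Ideal.Quotient.mkₐ ℂ Q).toLinearMap

lemma qmap_apply (p : MvPolynomial (Fin n) ℂ) : qmap Q p = Ideal.Quotient.mk Q p := rfl

lemma span_image_top (o : ℕ)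
    (hQo : (RingHom.ker (MvPolynomial.eval ξ)) ^ (o + 1) ≤ Q) :
    Submodule.span ℂ ((fun γ => qmap Q (xm ξ γ)) '' {γ | ∑ i, γ i ≤ o}) = ⊤ := by
  have hsurj : Function.Surjective (qmap Q) := fun y => by
    obtain ⟨p, rfl⟩ := Ideal.Quotient.mk_surjective (I := Q) y
    exact ⟨p, rfl⟩
  have h1 : Submodule.span ℂ ((fun γ => qmap Q (xm ξ γ)) '' (Set.univ : Set (Fin n → ℕ))) = ⊤ := by
    have : (fun γ => qmap Q (xm ξ γ)) '' Set.univ = (qmap Q) '' (Set.range (xm ξ)) := by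
      rw [Set.image_univ, ← Set.range_comp]; rfl
    rw [this, Submodule.span_image, span_xm, Submodule.map_top,
      LinearMap.range_eq_top.mpr hsurj]
  rw [eq_top_iff, ← h1, Submodule.span_le]
  rintro _ ⟨γ, -, rfl⟩
  by_cases h : ∑ i, γ i ≤ o
  · exact Submodule.subset_span ⟨γ, h, rfl⟩
  · have hz : qmap Q (xm ξ γ) = 0 := by
      rw [qmap_apply, Ideal.Quotient.eq_zero_iff_mem]
      exact (le_trans (Ideal.pow_le_pow_right (by omega)) hQo) (xm_mem_pow ξ γ)
    show qmap Q (xm ξ γ) ∈ _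
    rw [hz]
    exact Submodule.zero_mem _

end Quot

section BuildE

variable (ξ : Fin n → ℂ) (Q : Ideal (MvPolynomial (Fin n) ℂ))

lemma step_span (E : Finset (Fin n → ℕ)) (i : Fin n)
    (p : MvPolynomial (Fin n) ℂ) (hp : p ∈ Submodule.span ℂ (xm ξ '' E)) (S : Set (Fin n → ℕ))
    (hS : ∀ β ∈ E, β + Pi.single i 1 ∈ S) :
    qmap Q (p * (X i - C (ξ i))) ∈ Submodule.span ℂ ((fun γ => qmap Q (xm ξ γ)) '' S) := by
  induction hp using Submodule.span_induction with
  | mem x hx =>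
    obtain ⟨β, hβ, rfl⟩ := hx
    rw [← xm_add_single]
    exact Submodule.subset_span ⟨β + Pi.single i 1, hS β hβ, rfl⟩
  | zero => rw [zero_mul, map_zero]; exact Submodule.zero_mem _
  | add x y _ _ hx hy => rw [add_mul, map_add]; exact Submodule.add_mem _ hx hy
  | smul c x _ hx => rw [smul_mul_assoc, map_smul]; exact Submodule.smul_mem _ c hx

lemma sum_add_single (γ : Fin n → ℕ) (i : Fin n) :
    ∑ j : Fin n, (γ + (Pi.single i 1 : Fin n → ℕ)) j = (∑ j, γ j) + 1 := by
  simp [Finset.sum_add_distrib, Finset.sum_pi_single]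

set_option maxHeartbeats 1000000 in
set_option synthInstance.maxHeartbeats 200000 in
lemma exists_E (hQ1 : Q ≠ ⊤) (o : ℕ)
    (hQo : (RingHom.ker (MvPolynomial.eval ξ)) ^ (o + 1) ≤ Q) :
    ∃ E : Finset (Fin n → ℕ),
      (0 : Fin n → ℕ) ∈ E ∧
      (∀ γ ∈ E, ∑ i, γ i ≤ o) ∧
      (∀ γ ∈ E, γ ≠ 0 → ∃ β ∈ E, ∃ i, γ = β + Pi.single i 1) ∧
      LinearIndependent ℂ (fun γ : E => qmap Q (xm ξ (γ : Fin n → ℕ))) ∧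
      Submodule.span ℂ ((fun γ => qmap Q (xm ξ γ)) '' (E : Set (Fin n → ℕ))) = ⊤ := by
  haveI : Nontrivial (MvPolynomial (Fin n) ℂ ⧸ Q) := Ideal.Quotient.nontrivial_iff.mpr hQ1
  set v : (Fin n → ℕ) → (MvPolynomial (Fin n) ℂ ⧸ Q) := fun γ => qmap Q (xm ξ γ) with hv
  have key : ∀ t : ℕ, ∃ E : Finset (Fin n → ℕ),
      (0 : Fin n → ℕ) ∈ E ∧
      (∀ γ ∈ E, ∑ i, γ i ≤ t) ∧
      (∀ γ ∈ E, γ ≠ 0 → ∃ β ∈ E, ∃ i, γ = β + Pi.single i 1) ∧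
      LinearIndependent ℂ (fun γ : E => v (γ : Fin n → ℕ)) ∧
      Submodule.span ℂ (v '' {γ | ∑ i, γ i ≤ t}) ≤
        Submodule.span ℂ (v '' (E : Set (Fin n → ℕ))) := by
    intro t
    induction t with
    | zero =>
      refine ⟨{0}, Finset.mem_singleton_self 0, by simp, by simp, ?_, ?_⟩
      · haveI : Unique (({0} : Finset (Fin n → ℕ)) : Type _) :=
          ⟨⟨⟨0, Finset.mem_singleton_self 0⟩⟩, by
            rintro ⟨a, ha⟩
            simp only [Finset.mem_singleton] at ha
            exact Subtype.ext ha⟩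
        refine linearIndependent_unique_iff.mpr ?_
        show v ((default : (({0} : Finset (Fin n → ℕ)) : Type _)) : Fin n → ℕ) ≠ 0
        have hd : ((default : (({0} : Finset (Fin n → ℕ)) : Type _)) : Fin n → ℕ) = 0 :=
          Finset.mem_singleton.mp (default : (({0} : Finset (Fin n → ℕ)) : Type _)).2
        rw [hd, hv]
        simp only [xm_zero, map_one]
        exact one_ne_zero
      · have : {γ : Fin n → ℕ | ∑ i, γ i ≤ 0} = {0} := by
          ext γ
          simp only [Set.mem_setOf_eq, Set.mem_singleton_iff, Nat.le_zero,
            Finset.sum_eq_zero_iff, Finset.mem_univ, forall_true_left]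
          constructor
          · intro h; funext j; exact h j
          · intro h j; rw [h]; rfl
        rw [this]
        apply Submodule.span_mono
        intro x hx
        obtain ⟨γ, hγ, rfl⟩ := hx
        exact ⟨γ, by simpa using hγ, rfl⟩
    | succ t ih =>
      obtain ⟨E, h0, hdeg, hconn, hLI, hspan⟩ := ih
      classical
      -- candidate new exponents
      set N : Finset (Fin n → ℕ) :=
        (E ×ˢ (Finset.univ : Finset (Fin n))).image (fun p => p.1 + Pi.single p.2 1) with hN
      set T : Finset (Fin n → ℕ) := E ∪ N with hT
      have hmemN : ∀ γ ∈ N, (∑ i, γ i ≤ t + 1) ∧ ∃ β ∈ E, ∃ i, γ = β + Pi.single i 1 := by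
        intro γ hγ
        rw [hN, Finset.mem_image] at hγ
        obtain ⟨p, hp, rfl⟩ := hγ
        rw [Finset.mem_product] at hp
        refine ⟨?_, p.1, hp.1, p.2, rfl⟩
        rw [sum_add_single]
        exact Nat.succ_le_succ (hdeg _ hp.1)
      -- step spanning lemma
      have hstep : Submodule.span ℂ (v '' {γ | ∑ i, γ i ≤ t + 1}) ≤
          Submodule.span ℂ (v '' (T : Set (Fin n → ℕ))) := by
        rw [Submodule.span_le]
        rintro _ ⟨γ, hγ, rfl⟩
        simp only [Set.mem_setOf_eq] at hγ
        by_cases h : ∑ i, γ i ≤ t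
        · refine SetLike.le_def.mp ?_ (hspan (Submodule.subset_span ⟨γ, h, rfl⟩))
          apply Submodule.span_mono
          exact Set.image_mono (by simp [hT])
        · -- γ has degree exactly t+1, pick i with γ i ≠ 0
          have hγ0 : γ ≠ 0 := by
            intro hc
            rw [hc] at h
            simp at h
          obtain ⟨i, hi⟩ := Function.ne_iff.mp hγ0
          have hi' : γ i ≠ 0 := by simpa using hi
          set γ' : Fin n → ℕ := Function.update γ i (γ i - 1) with hγ'
          have hsplit : γ = γ' + Pi.single i 1 := by
            funext j
            by_cases hj : j = i
            · subst hj
              simp only [Pi.add_apply, hγ', Function.update_self, Pi.single_eq_same]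
              omega
            · simp [hγ', Function.update_of_ne hj, Pi.single_eq_of_ne hj]
          have hdγ' : ∑ j, γ' j ≤ t := by
            have h1 : ∑ j, γ j = (∑ j, γ' j) + 1 := by
              conv_lhs => rw [hsplit]
              exact sum_add_single γ' i
            omega
          have hγ'mem : v γ' ∈ Submodule.span ℂ (v '' (E : Set (Fin n → ℕ))) :=
            hspan (Submodule.subset_span ⟨γ', hdγ', rfl⟩)
          -- write v γ' = qmap of some p in the span of xm '' E
          have himg : v '' (E : Set (Fin n → ℕ)) = (qmap Q) '' (xm ξ '' (E : Set (Fin n → ℕ))) := by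
            rw [← Set.image_comp]; rfl
          rw [himg, Submodule.span_image] at hγ'mem
          obtain ⟨p, hp, hqp⟩ := Submodule.mem_map.mp hγ'mem
          have hxmγ : v γ = qmap Q (p * (X i - C (ξ i))) := by
            have hd : xm ξ γ' - p ∈ Q := by
              have : qmap Q (xm ξ γ' - p) = 0 := by
                rw [map_sub, hqp]
                exact sub_self _
              rwa [qmap_apply, Ideal.Quotient.eq_zero_iff_mem] at this
            have : xm ξ γ = (xm ξ γ' - p) * (X i - C (ξ i)) + p * (X i - C (ξ i)) := by
              rw [hsplit, xm_add_single]
              ring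
            rw [hv]
            show qmap Q (xm ξ γ) = _
            rw [this, map_add]
            have hz : qmap Q ((xm ξ γ' - p) * (X i - C (ξ i))) = 0 := by
              rw [qmap_apply, Ideal.Quotient.eq_zero_iff_mem]
              exact Ideal.mul_mem_right _ _ hd
            rw [hz, zero_add]
          rw [hxmγ]
          exact step_span ξ Q E i p hp _ (fun β hβ => by
            simp only [hT, Finset.coe_union, Set.mem_union]
            right
            simp only [hN, Finset.coe_image, Set.mem_image, Finset.coe_product]
            exact ⟨(β, i), by simpa using hβ, rfl⟩)
      -- extend the linearly independent family inside v '' T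
      have hrange : Set.range (fun γ : E => v (γ : Fin n → ℕ)) = v '' (E : Set (Fin n → ℕ)) := by
        ext x
        simp [Set.mem_image]
      have hLIset : LinearIndependent ℂ
          ((↑) : (v '' (E : Set (Fin n → ℕ))) → (MvPolynomial (Fin n) ℂ ⧸ Q)) := by
        have := (linearIndepOn_id_range_iff hLI.injective).mpr hLI
        rwa [hrange] at this
      set sE : Set (MvPolynomial (Fin n) ℂ ⧸ Q) := v '' (E : Set (Fin n → ℕ)) with hsE
      obtain ⟨b, hbT, hsb, hspanb, hLIb⟩ :=
        exists_linearIndepOn_id_extension hLIset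
          (show sE ⊆ v '' (T : Set (Fin n → ℕ)) from Set.image_mono (by
            rw [hT, Finset.coe_union]; exact Set.subset_union_left))
      have hbfin : (b \ sE).Finite :=
        ((T.finite_toSet.image v).subset hbT).diff
      have hchoice : ∀ w : ↥(b \ sE), ∃ γ, γ ∈ N ∧ v γ = (w : MvPolynomial (Fin n) ℂ ⧸ Q) := by
        rintro ⟨w, hwb, hwE⟩
        obtain ⟨γ, hγT, rfl⟩ := hbT hwb
        rw [hT, Finset.coe_union, Set.mem_union] at hγT
        rcases hγT with hγE | hγN
        · exact absurd (Set.mem_image_of_mem v hγE) hwE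
        · exact ⟨γ, hγN, rfl⟩
      choose c hcN hcv using hchoice
      haveI := hbfin.to_subtype
      have hDfin : (Set.range c).Finite := Set.finite_range c
      set E' : Finset (Fin n → ℕ) := E ∪ hDfin.toFinset with hE'
      have hE'coe : (E' : Set (Fin n → ℕ)) = (E : Set (Fin n → ℕ)) ∪ Set.range c := by
        rw [hE', Finset.coe_union, Set.Finite.coe_toFinset]
      have himgE' : v '' (E' : Set (Fin n → ℕ)) = b := by
        rw [hE'coe, Set.image_union, ← Set.range_comp]
        have h2 : Set.range (v ∘ c) = b \ sE := by
          have : v ∘ c = fun w : ↥(b \ sE) => (w : MvPolynomial (Fin n) ℂ ⧸ Q) :=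
            funext fun w => hcv w
          rw [this, Subtype.range_coe]
        rw [h2, ← hsE, Set.union_diff_cancel hsb]
      have hmemE' : ∀ γ ∈ E', γ ∈ E ∨ γ ∈ N := by
        intro γ hγ
        rw [hE', Finset.mem_union] at hγ
        rcases hγ with h | h
        · exact Or.inl h
        · rw [Set.Finite.mem_toFinset] at h
          obtain ⟨w, rfl⟩ := h
          exact Or.inr (hcN w)
      refine ⟨E', ?_, ?_, ?_, ?_, ?_⟩
      · rw [hE', Finset.mem_union]; exact Or.inl h0
      · intro γ hγ
        rcases hmemE' γ hγ with h | h
        · exact le_trans (hdeg γ h) (Nat.le_succ t)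
        · exact (hmemN γ h).1
      · intro γ hγ hγ0
        rcases hmemE' γ hγ with h | h
        · obtain ⟨β, hβ, i, hform⟩ := hconn γ h hγ0
          exact ⟨β, by rw [hE', Finset.mem_union]; exact Or.inl hβ, i, hform⟩
        · obtain ⟨β, hβ, i, hform⟩ := (hmemN γ h).2
          exact ⟨β, by rw [hE', Finset.mem_union]; exact Or.inl hβ, i, hform⟩
      · -- linear independence over E'
        have hmm : ∀ γ : E', v (γ : Fin n → ℕ) ∈ b := by
          intro γ
          rw [← himgE']
          exact Set.mem_image_of_mem v (Finset.mem_coe.mpr γ.2)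
        set e : E' → ↥b := fun γ => ⟨v (γ : Fin n → ℕ), hmm γ⟩ with he
        have einj : Function.Injective e := by
          rintro ⟨γ1, hγ1⟩ ⟨γ2, hγ2⟩ hee
          have h12 : v γ1 = v γ2 := congrArg Subtype.val hee
          have hmem1 := hγ1; have hmem2 := hγ2
          rw [hE', Finset.mem_union, Set.Finite.mem_toFinset] at hmem1 hmem2
          have hEc : ∀ γ, γ ∈ E → ∀ w : ↥(b \ sE), γ = c w → False := by
            intro γ hγE w hγc
            have h1 : v γ ∈ sE := Set.mem_image_of_mem v hγE
            have h2 : v γ = (w : MvPolynomial (Fin n) ℂ ⧸ Q) := by rw [hγc]; exact hcv w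
            exact w.2.2 (h2 ▸ h1)
          apply Subtype.ext
          show γ1 = γ2
          rcases hmem1 with h1 | h1 <;> rcases hmem2 with h2 | h2
          · have := hLI.injective (a₁ := ⟨γ1, h1⟩) (a₂ := ⟨γ2, h2⟩) h12
            exact congrArg Subtype.val this
          · obtain ⟨w2, rfl⟩ := h2
            exfalso
            have hv2 : v (c w2) = (w2 : MvPolynomial (Fin n) ℂ ⧸ Q) := hcv w2
            have h1' : v γ1 ∈ sE := Set.mem_image_of_mem v h1
            rw [h12, hv2] at h1'
            exact w2.2.2 h1'
          · obtain ⟨w1, rfl⟩ := h1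
            exfalso
            have hv1 : v (c w1) = (w1 : MvPolynomial (Fin n) ℂ ⧸ Q) := hcv w1
            have h2' : v γ2 ∈ sE := Set.mem_image_of_mem v h2
            rw [← h12, hv1] at h2'
            exact w1.2.2 h2'
          · obtain ⟨w1, rfl⟩ := h1
            obtain ⟨w2, rfl⟩ := h2
            have : (w1 : MvPolynomial (Fin n) ℂ ⧸ Q) = (w2 : MvPolynomial (Fin n) ℂ ⧸ Q) := by
              rw [← hcv w1, ← hcv w2]; exact h12
            rw [Subtype.ext this]
        have : LinearIndependent ℂ (((↑) : ↥b → MvPolynomial (Fin n) ℂ ⧸ Q) ∘ e) :=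
          LinearIndependent.comp hLIb e einj
        exact this
      · refine le_trans hstep ?_
        have h1 : Submodule.span ℂ (v '' (T : Set (Fin n → ℕ))) ≤ Submodule.span ℂ b :=
          Submodule.span_le.mpr hspanb
        rw [himgE']
        exact h1
  obtain ⟨E, h0, hdeg, hconn, hLI, hspan⟩ := key o
  refine ⟨E, h0, hdeg, hconn, hLI, ?_⟩
  rw [eq_top_iff, ← span_image_top ξ Q o hQo]
  exact hspan

end BuildE

section Dual

variable (ξ : Fin n → ℂ) (Q : Ideal (MvPolynomial (Fin n) ℂ))

lemma perp_zero_on {Λ : Module.Dual ℂ (MvPolynomial (Fin n) ℂ)} (hΛ : Λ ∈ perp Q)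
    {p : MvPolynomial (Fin n) ℂ} (hp : p ∈ Q) : Λ p = 0 :=
  (Submodule.mem_dualAnnihilator Λ).mp hΛ p hp

lemma perp_ext (S : Set (Fin n → ℕ))
    (hspan : Submodule.span ℂ ((fun γ => qmap Q (xm ξ γ)) '' S) = ⊤)
    {Λ₁ Λ₂ : Module.Dual ℂ (MvPolynomial (Fin n) ℂ)}
    (h1 : Λ₁ ∈ perp Q) (h2 : Λ₂ ∈ perp Q)
    (hag : ∀ γ ∈ S, Λ₁ (xm ξ γ) = Λ₂ (xm ξ γ)) : Λ₁ = Λ₂ := by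
  apply LinearMap.ext
  intro p
  have himg : (fun γ => qmap Q (xm ξ γ)) '' S = (qmap Q) '' (xm ξ '' S) := by
    rw [← Set.image_comp]; rfl
  have hmem : qmap Q p ∈ Submodule.map (qmap Q) (Submodule.span ℂ (xm ξ '' S)) := by
    rw [← Submodule.span_image, ← himg, hspan]; trivial
  obtain ⟨p', hp', hqp⟩ := Submodule.mem_map.mp hmem
  have hdiff : p - p' ∈ Q := by
    have : qmap Q (p - p') = 0 := by rw [map_sub, hqp, sub_self]
    rwa [qmap_apply, Ideal.Quotient.eq_zero_iff_mem] at this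
  have hagree : ∀ r ∈ Submodule.span ℂ (xm ξ '' S), Λ₁ r = Λ₂ r := by
    intro r hr
    induction hr using Submodule.span_induction with
    | mem x hx =>
      obtain ⟨γ, hγ, rfl⟩ := hx
      exact hag γ hγ
    | zero => simp
    | add x y _ _ hx hy => rw [map_add, map_add, hx, hy]
    | smul c x _ hx => rw [map_smul, map_smul, hx]
  have e1 : Λ₁ p = Λ₁ p' + Λ₁ (p - p') := by rw [← map_add]; congr 1; ring
  have e2 : Λ₂ p = Λ₂ p' + Λ₂ (p - p') := by rw [← map_add]; congr 1; ring
  rw [e1, e2, hagree p' hp', perp_zero_on Q h1 hdiff, perp_zero_on Q h2 hdiff]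

variable (o : ℕ)

/-- The finite set of exponents of total degree at most `o`. -/
noncomputable def degF : Finset (Fin n → ℕ) :=
  (Finset.Icc (0 : Fin n → ℕ) (fun _ => o)).filter (fun β => ∑ i, β i ≤ o)

lemma mem_degF (β : Fin n → ℕ) : β ∈ degF (n := n) o ↔ ∑ i, β i ≤ o := by
  rw [degF, Finset.mem_filter, Finset.mem_Icc]
  constructor
  · exact fun h => h.2
  · intro h
    refine ⟨⟨fun i => Nat.zero_le _, fun i => ?_⟩, h⟩
    calc β i ≤ ∑ j, β j := Finset.single_le_sum (fun j _ => Nat.zero_le (β j)) (Finset.mem_univ i)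
    _ ≤ o := h

lemma fact_ne_zero (γ : Fin n → ℕ) : (∏ i, ((γ i).factorial : ℂ)) ≠ 0 := by
  apply Finset.prod_ne_zero_iff.mpr
  intro i _
  exact_mod_cast Nat.cast_ne_zero.mpr (Nat.factorial_ne_zero (γ i))

lemma macaulay (hQo : (RingHom.ker (MvPolynomial.eval ξ)) ^ (o + 1) ≤ Q)
    {Λ : Module.Dual ℂ (MvPolynomial (Fin n) ℂ)} (hΛ : Λ ∈ perp Q) :
    Λ = ∑ β ∈ degF (n := n) o,
        (Λ (xm ξ β) * (∏ i, ((β i).factorial : ℂ))⁻¹) • diffAt ξ β := by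
  apply LinearMap.ext_on (span_xm ξ)
  rintro _ ⟨γ, rfl⟩
  rw [LinearMap.sum_apply]
  have hterm : ∀ β ∈ degF (n := n) o,
      ((Λ (xm ξ β) * (∏ i, ((β i).factorial : ℂ))⁻¹) • diffAt ξ β) (xm ξ γ)
        = if β = γ then Λ (xm ξ β) * (∏ i, ((β i).factorial : ℂ))⁻¹ * (∏ i, ((γ i).factorial : ℂ)) else 0 := by
    intro β _
    rw [LinearMap.smul_apply, diffAt_xm, smul_eq_mul, mul_ite, mul_zero]
  rw [Finset.sum_congr rfl hterm, Finset.sum_ite_eq' (degF (n := n) o) γ]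
  by_cases hγ : γ ∈ degF (n := n) o
  · rw [if_pos hγ, mul_assoc, inv_mul_cancel₀ (fact_ne_zero γ), mul_one]
  · rw [if_neg hγ]
    have hdeg : ¬ (∑ i, γ i ≤ o) := fun h => hγ ((mem_degF o γ).mpr h)
    apply perp_zero_on Q hΛ
    exact (le_trans (Ideal.pow_le_pow_right (by omega)) hQo) (xm_mem_pow ξ γ)

end Dual


set_option maxHeartbeats 1000000 in
/-- Existence of an orthogonal primal-dual pair for an `m_ξ`-primary ideal `Q` of
multiplicity `δ` and nil-index `o`: a set of exponents `E = {α_1,…,α_δ}` connected to `1`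
with `α_1 = 0` such that `B = {(x−ξ)^{α_k}}` is a basis of `ℂ[x]/Q`, together with a
unique dual basis `Λ_0,…,Λ_{δ−1}` of `Q^⊥` with
`Λ_j = (1/α_{j+1}!)∂^{α_{j+1}}_ξ + Σ_{|β|≤o, β∉E} ν_{α_{j+1},β} ∂^β_ξ`
and `Λ_i((x−ξ)^{α_{j+1}}) = δ_{ij}`. -/
theorem exists_orthogonal_primal_dual_pair {n : ℕ} (ξ : Fin n → ℂ)
    (Q : Ideal (MvPolynomial (Fin n) ℂ))
    (hprim : Q.IsPrimary)
    (hrad : Q.radical = RingHom.ker (MvPolynomial.eval ξ))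
    (δ : ℕ) (hδ : δ = Module.finrank ℂ (MvPolynomial (Fin n) ℂ ⧸ Q))
    (o : ℕ) (ho : (RingHom.ker (MvPolynomial.eval ξ)) ^ (o + 1) ≤ Q)
    (homin : ∀ t, (RingHom.ker (MvPolynomial.eval ξ)) ^ (t + 1) ≤ Q → o ≤ t) :
    ∃ α : Fin δ → (Fin n → ℕ),
      Function.Injective α ∧
      (∀ h : 0 < δ, α ⟨0, h⟩ = 0) ∧
      -- E is connected to 1
      (∀ k, α k ≠ 0 → ∃ l i, α k = α l + Pi.single i 1) ∧
      -- B is a basis of ℂ[x]/Q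
      LinearIndependent ℂ (fun k => Ideal.Quotient.mk Q (xm ξ (α k))) ∧
      Submodule.span ℂ (Set.range fun k => Ideal.Quotient.mk Q (xm ξ (α k))) = ⊤ ∧
      -- unique orthogonal dual basis of the prescribed form
      (∃! Λ : Fin δ → Module.Dual ℂ (MvPolynomial (Fin n) ℂ),
        (∀ j, Λ j ∈ perp Q) ∧
        (∀ j k, Λ j (xm ξ (α k)) = if j = k then 1 else 0) ∧
        Submodule.span ℂ (Set.range Λ) = perp Q ∧
        (∀ j, Λ j - (∏ i, ((α j i).factorial : ℂ))⁻¹ • diffAt ξ (α j) ∈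
          Submodule.span ℂ
            {L | ∃ β : Fin n → ℕ, β ∉ Set.range α ∧ (∑ i, β i) ≤ o ∧ L = diffAt ξ β})) := by
  classical
  -- Q is a proper ideal
  have hQ1 : Q ≠ ⊤ := by
    intro h
    rw [h] at hrad
    have h1 : (1 : MvPolynomial (Fin n) ℂ) ∈ Ideal.radical (⊤ : Ideal (MvPolynomial (Fin n) ℂ)) :=
      Ideal.le_radical Submodule.mem_top
    rw [hrad] at h1
    rw [RingHom.mem_ker, map_one] at h1
    exact one_ne_zero h1
  obtain ⟨E, h0E, hdegE, hconnE, hLIE, hspanE⟩ := exists_E ξ Q hQ1 o ho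
  set v : (Fin n → ℕ) → (MvPolynomial (Fin n) ℂ ⧸ Q) := fun γ => qmap Q (xm ξ γ) with hv
  have hrangeE : Set.range (fun γ : E => v (γ : Fin n → ℕ)) = v '' (E : Set (Fin n → ℕ)) := by
    ext x; simp [Set.mem_image]
  -- basis of the quotient indexed by E
  have hspanE' : ⊤ ≤ Submodule.span ℂ (Set.range (fun γ : E => v (γ : Fin n → ℕ))) := by
    rw [hrangeE, hspanE]
  let bE : Module.Basis E ℂ (MvPolynomial (Fin n) ℂ ⧸ Q) := Module.Basis.mk hLIE hspanE'
  have hcard : δ = E.card := by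
    rw [hδ, Module.finrank_eq_card_basis bE, Fintype.card_coe]
  -- enumerate E with 0 first
  set L : List (Fin n → ℕ) := (0 : Fin n → ℕ) :: (E.erase 0).toList with hL
  have hLnd : L.Nodup := by
    rw [hL, List.nodup_cons]
    exact ⟨fun hc => (Finset.mem_erase.mp (Finset.mem_toList.mp hc)).1 rfl,
      Finset.nodup_toList _⟩
  have hLlen : L.length = δ := by
    rw [hL, List.length_cons, Finset.length_toList, Finset.card_erase_of_mem h0E, hcard]
    have : 0 < E.card := Finset.card_pos.mpr ⟨0, h0E⟩
    omega
  have hLmem : ∀ x, x ∈ L ↔ x ∈ E := by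
    intro x
    rw [hL, List.mem_cons, Finset.mem_toList, Finset.mem_erase]
    constructor
    · rintro (rfl | ⟨-, h⟩)
      · exact h0E
      · exact h
    · intro h
      by_cases hx : x = 0
      · exact Or.inl hx
      · exact Or.inr ⟨hx, h⟩
  set α : Fin δ → (Fin n → ℕ) := fun k => L.get ⟨k.1, by rw [hLlen]; exact k.2⟩ with hα
  have hαinj : Function.Injective α := by
    intro k l hkl
    have h2 := List.nodup_iff_injective_get.mp hLnd hkl
    have h3 : (k : ℕ) = (l : ℕ) := congrArg (Fin.val (n := L.length)) h2
    exact Fin.ext h3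
  have hα0 : ∀ h : 0 < δ, α ⟨0, h⟩ = 0 := fun h => rfl
  have hrangeα : Set.range α = (E : Set (Fin n → ℕ)) := by
    ext x
    constructor
    · rintro ⟨k, rfl⟩
      exact (hLmem _).mp (L.get_mem _)
    · intro hx
      obtain ⟨k, hk⟩ := List.mem_iff_get.mp ((hLmem x).mpr hx)
      exact ⟨⟨k.1, by rw [← hLlen]; exact k.2⟩, hk⟩
  have hαmem : ∀ k, α k ∈ E := fun k => by
    have : α k ∈ Set.range α := ⟨k, rfl⟩
    rw [hrangeα] at this
    exact this
  -- connectivity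
  have hconn : ∀ k, α k ≠ 0 → ∃ l i, α k = α l + Pi.single i 1 := by
    intro k hk
    obtain ⟨β, hβ, i, hform⟩ := hconnE (α k) (hαmem k) hk
    have : β ∈ Set.range α := by rw [hrangeα]; exact hβ
    obtain ⟨l, rfl⟩ := this
    exact ⟨l, i, hform⟩
  -- the Fin δ indexed family
  have heα : ∀ k, (⟨α k, hαmem k⟩ : E) ∈ Set.univ := fun _ => trivial
  have hLIα : LinearIndependent ℂ (fun k => v (α k)) := by
    have einj : Function.Injective (fun k => (⟨α k, hαmem k⟩ : E)) := by
      intro k l h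
      exact hαinj (congrArg Subtype.val h)
    exact hLIE.comp (fun k => (⟨α k, hαmem k⟩ : E)) einj
  have hspanα : Submodule.span ℂ (Set.range fun k => v (α k)) = ⊤ := by
    have : Set.range (fun k => v (α k)) = v '' (E : Set (Fin n → ℕ)) := by
      rw [← hrangeα, ← Set.range_comp]
      rfl
    rw [this, hspanE]
  -- basis indexed by Fin δ
  let b : Module.Basis (Fin δ) ℂ (MvPolynomial (Fin n) ℂ ⧸ Q) := Module.Basis.mk hLIα (le_of_eq hspanα.symm)
  -- the dual functionals
  set Λ : Fin δ → Module.Dual ℂ (MvPolynomial (Fin n) ℂ) :=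
    fun j => (b.coord j).comp (qmap Q) with hΛdef
  have hperp : ∀ j, Λ j ∈ perp Q := by
    intro j
    rw [perp]
    rw [Submodule.mem_dualAnnihilator]
    intro w hw
    have hw' : w ∈ Q := hw
    have : qmap Q w = 0 := by
      rw [qmap_apply, Ideal.Quotient.eq_zero_iff_mem]; exact hw'
    show b.coord j (qmap Q w) = 0
    rw [this, map_zero]
  have horder : ∀ j k, Λ j (xm ξ (α k)) = if j = k then 1 else 0 := by
    intro j k
    show b.coord j (qmap Q (xm ξ (α k))) = _
    have : qmap Q (xm ξ (α k)) = b k := by rw [Module.Basis.mk_apply]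
    rw [this, Module.Basis.coord_apply, b.repr_self, Finsupp.single_apply]
    by_cases h : j = k
    · subst h; simp
    · rw [if_neg (fun hc => h hc.symm), if_neg h]
  -- agreement on E implies equality for members of perp Q
  have hext : ∀ Λ₁ Λ₂ : Module.Dual ℂ (MvPolynomial (Fin n) ℂ), Λ₁ ∈ perp Q → Λ₂ ∈ perp Q →
      (∀ k, Λ₁ (xm ξ (α k)) = Λ₂ (xm ξ (α k))) → Λ₁ = Λ₂ := by
    intro Λ₁ Λ₂ h1 h2 hag
    apply perp_ext ξ Q (E : Set (Fin n → ℕ)) hspanE h1 h2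
    intro γ hγ
    have : γ ∈ Set.range α := by rw [hrangeα]; exact hγ
    obtain ⟨k, rfl⟩ := this
    exact hag k
  -- span of the dual family is perp Q
  have hspanΛ : Submodule.span ℂ (Set.range Λ) = perp Q := by
    apply le_antisymm
    · rw [Submodule.span_le]
      rintro _ ⟨j, rfl⟩
      exact hperp j
    · intro Λ' hΛ'
      have hsum : (∑ j, (Λ' (xm ξ (α j))) • Λ j) ∈ perp Q :=
        Submodule.sum_mem _ (fun j _ => Submodule.smul_mem _ _ (hperp j))
      have : Λ' = ∑ j, (Λ' (xm ξ (α j))) • Λ j := by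
        apply hext _ _ hΛ' hsum
        intro k
        rw [LinearMap.sum_apply]
        have hterm : ∀ j ∈ Finset.univ, ((Λ' (xm ξ (α j))) • Λ j) (xm ξ (α k))
            = if j = k then Λ' (xm ξ (α j)) else 0 := by
          intro j _
          rw [LinearMap.smul_apply, horder j k, smul_eq_mul, mul_ite, mul_one, mul_zero]
        rw [Finset.sum_congr rfl hterm, Finset.sum_ite_eq' Finset.univ k
          (fun j => Λ' (xm ξ (α j))), if_pos (Finset.mem_univ k)]
      rw [this]
      exact Submodule.sum_mem _ (fun j _ =>
        Submodule.smul_mem _ _ (Submodule.subset_span ⟨j, rfl⟩))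
  -- the prescribed form
  have hform : ∀ j, Λ j - (∏ i, ((α j i).factorial : ℂ))⁻¹ • diffAt ξ (α j) ∈
      Submodule.span ℂ
        {L | ∃ β : Fin n → ℕ, β ∉ Set.range α ∧ (∑ i, β i) ≤ o ∧ L = diffAt ξ β} := by
    intro j
    have hmac := macaulay ξ Q o ho (hperp j)
    have hαjF : α j ∈ degF (n := n) o := (mem_degF o (α j)).mpr (hdegE (α j) (hαmem j))
    have hsplit : Λ j - (∏ i, ((α j i).factorial : ℂ))⁻¹ • diffAt ξ (α j)
        = ∑ β ∈ (degF (n := n) o).erase (α j),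
            (Λ j (xm ξ β) * (∏ i, ((β i).factorial : ℂ))⁻¹) • diffAt ξ β := by
      rw [Finset.sum_erase_eq_sub hαjF, ← hmac, horder j j, if_pos rfl, one_mul]
    rw [hsplit]
    apply Submodule.sum_mem
    intro β hβ
    have hβF : β ∈ degF (n := n) o := Finset.mem_of_mem_erase hβ
    have hβne : β ≠ α j := (Finset.mem_erase.mp hβ).1
    by_cases hβr : β ∈ Set.range α
    · obtain ⟨k, rfl⟩ := hβr
      have hkj : j ≠ k := fun hc => hβne (by rw [hc])
      rw [horder j k, if_neg hkj, zero_mul, zero_smul]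
      exact Submodule.zero_mem _
    · exact Submodule.smul_mem _ _
        (Submodule.subset_span ⟨β, hβr, (mem_degF o β).mp hβF, rfl⟩)
  refine ⟨α, hαinj, hα0, hconn, hLIα, hspanα, Λ, ⟨hperp, horder, hspanΛ, hform⟩, ?_⟩
  rintro Λ' ⟨hperp', horder', -, -⟩
  funext j
  apply hext _ _ (hperp' j) (hperp j)
  intro k
  rw [horder j k, horder' j k]
end

section
/- Let f ∈ ℂ[x]^N have an isolated root ξ with rank J_f(ξ) = r < n, and let f^{(1)} be an i-deflated system of order 1 of f (obtained by appending the polynomials Λ^x(f) for kernel-generating differential forms Λ^x whose coefficients are polynomials equal at ξ to a basis of part of ker J_f(ξ)). Then the nil-index satisfies o_ξ(f^{(1)}) < o_ξ(f), and consequently the multiplicity satisfies δ_ξ(f^{(1)}) < δ_ξ(f) while δ_ξ(f^{(1)}) ≥ 1. -/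
open MvPolynomial

/-- `D = I^⊥ ∩ ℂ[∂_ξ]`, the dual of the local quotient ring at `ξ`;
its dimension is the multiplicity `δ_ξ`. -/
noncomputable def Dfull {n : ℕ} (ξ : Fin n → ℂ) (I : Ideal (MvPolynomial (Fin n) ℂ)) :
    Submodule ℂ (Module.Dual ℂ (MvPolynomial (Fin n) ℂ)) :=
  perp I ⊓ polyDiffOps ξ

/-- `D_t`: the elements of `D` of order at most `t`. -/
noncomputable def Dt {n : ℕ} (ξ : Fin n → ℂ) (I : Ideal (MvPolynomial (Fin n) ℂ)) (t : ℕ) :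
    Submodule ℂ (Module.Dual ℂ (MvPolynomial (Fin n) ℂ)) :=
  perp I ⊓ Submodule.span ℂ {Λ | ∃ β : Fin n → ℕ, (∑ i, β i) ≤ t ∧ Λ = diffAt ξ β}

theorem pderiv_comm' {n : ℕ} {K : Type*} [CommSemiring K] (i j : Fin n)
    (p : MvPolynomial (Fin n) K) :
    MvPolynomial.pderiv i (MvPolynomial.pderiv j p) =
      MvPolynomial.pderiv j (MvPolynomial.pderiv i p) := by
  induction p using MvPolynomial.induction_on' with
  | monomial s a =>
    rcases eq_or_ne i j with rfl | hij
    · rfl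
    · simp only [pderiv_monomial, Finsupp.sub_apply, Finsupp.single_apply,
        if_neg hij, if_neg (Ne.symm hij), Nat.sub_zero, tsub_tsub]
      rw [add_comm]
      congr 1
      rw [Finsupp.tsub_apply, Finsupp.tsub_apply, Finsupp.single_apply, Finsupp.single_apply,
        if_neg (show ¬ j = i from Ne.symm hij), if_neg (show ¬ i = j from hij)]
      push_cast [Nat.sub_zero]
      ring
  | add p q hp hq => simp [hp, hq]

theorem commute_pderiv {n : ℕ} {K : Type*} [CommSemiring K] (i j : Fin n) :
    Commute ((MvPolynomial.pderiv i).toLinearMap : Module.End K (MvPolynomial (Fin n) K))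
      ((MvPolynomial.pderiv j).toLinearMap : Module.End K (MvPolynomial (Fin n) K)) :=
  LinearMap.ext fun p => pderiv_comm' i j p

-- general list-of-fn product lemmas for commuting families
theorem ofFn_prod_pow_add {M : Type*} [Monoid M] : ∀ {k : ℕ} (A : Fin k → M),
    (∀ i j, Commute (A i) (A j)) → ∀ (β γ : Fin k → ℕ),
    (List.ofFn fun i => A i ^ (β i + γ i)).prod =
      (List.ofFn fun i => A i ^ β i).prod * (List.ofFn fun i => A i ^ γ i).prod := by
  intro k
  induction k with
  | zero => intro A hA β γ; simp
  | succ k ih =>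
    intro A hA β γ
    have tail := ih (fun i => A i.succ) (fun i j => hA i.succ j.succ)
      (fun i => β i.succ) (fun i => γ i.succ)
    simp only [List.ofFn_succ, List.prod_cons] at *
    rw [tail, pow_add]
    have hcomm : Commute (A 0 ^ γ 0) (List.ofFn fun i : Fin k => A i.succ ^ β i.succ).prod := by
      apply Commute.list_prod_right
      intro x hx
      rw [List.mem_ofFn] at hx
      obtain ⟨i, rfl⟩ := hx
      exact (hA 0 i.succ).pow_pow _ _
    rw [mul_assoc, mul_assoc, ← mul_assoc (A 0 ^ γ 0), hcomm.eq, mul_assoc]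

theorem ofFn_prod_pow_single {M : Type*} [Monoid M] : ∀ {k : ℕ} (A : Fin k → M) (j : Fin k),
    (List.ofFn fun i => A i ^ (Pi.single j 1 : Fin k → ℕ) i).prod = A j := by
  intro k
  induction k with
  | zero => exact fun _ j => j.elim0
  | succ k ih =>
    intro A j
    simp only [List.ofFn_succ, List.prod_cons]
    refine Fin.cases ?_ ?_ j
    · have : ∀ i : Fin k, (Pi.single (0 : Fin (k+1)) 1 : Fin (k+1) → ℕ) i.succ = 0 := fun i =>
        Pi.single_eq_of_ne (by simp [Fin.ext_iff]) 1
      simp only [this, Pi.single_eq_same, pow_one, pow_zero]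
      rw [List.prod_eq_one, mul_one]
      intro x hx
      rw [List.mem_ofFn] at hx
      obtain ⟨i, rfl⟩ := hx; rfl
    · intro j'
      have h0 : (Pi.single j'.succ 1 : Fin (k+1) → ℕ) 0 = 0 :=
        Pi.single_eq_of_ne (by simp [Fin.ext_iff]) 1
      have hs : ∀ i : Fin k, (Pi.single j'.succ 1 : Fin (k+1) → ℕ) i.succ
          = (Pi.single j' 1 : Fin k → ℕ) i := by
        intro i
        rcases eq_or_ne i j' with rfl | hij
        · simp
        · rw [Pi.single_eq_of_ne (fun h => hij (Fin.succ_injective _ h)) 1,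
            Pi.single_eq_of_ne hij 1]
      simp only [h0, pow_zero, one_mul, hs]
      exact ih (fun i => A i.succ) j'

theorem ofFn_prod_pow_zero {M : Type*} [Monoid M] {k : ℕ} (A : Fin k → M) :
    (List.ofFn fun i => A i ^ (0:ℕ)).prod = 1 := by
  rw [List.prod_eq_one]
  intro x hx
  rw [List.mem_ofFn] at hx
  obtain ⟨i, rfl⟩ := hx
  exact pow_zero _

theorem pd_zero {n : ℕ} {K : Type*} [CommSemiring K] :
    (pd (0 : Fin n → ℕ) : Module.End K (MvPolynomial (Fin n) K)) = 1 :=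
  ofFn_prod_pow_zero _

theorem pd_add {n : ℕ} {K : Type*} [CommSemiring K] (β γ : Fin n → ℕ) :
    (pd (β + γ) : Module.End K (MvPolynomial (Fin n) K)) = pd β * pd γ :=
  ofFn_prod_pow_add _ commute_pderiv β γ

theorem pd_single {n : ℕ} {K : Type*} [CommSemiring K] (j : Fin n) :
    (pd (Pi.single j 1 : Fin n → ℕ) : Module.End K (MvPolynomial (Fin n) K)) =
      (MvPolynomial.pderiv j).toLinearMap :=
  ofFn_prod_pow_single _ j

theorem diffAt_zero_apply {n : ℕ} (ξ : Fin n → ℂ) (p : MvPolynomial (Fin n) ℂ) :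
    diffAt ξ 0 p = MvPolynomial.eval ξ p := by
  rw [diffAt, LinearMap.comp_apply, pd_zero, Module.End.one_apply]
  rw [AlgHom.toLinearMap_apply, MvPolynomial.aeval_def, MvPolynomial.eval,
    Algebra.algebraMap_self]
  rfl

theorem diffAt_add_single {n : ℕ} (ξ : Fin n → ℂ) (γ : Fin n → ℕ) (j : Fin n)
    (p : MvPolynomial (Fin n) ℂ) :
    diffAt ξ (γ + Pi.single j 1) p = diffAt ξ γ (MvPolynomial.pderiv j p) := by
  rw [diffAt, diffAt, LinearMap.comp_apply, LinearMap.comp_apply, pd_add, pd_single,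
    Module.End.mul_apply]
  rfl

/-- the dual basis monomials `(x-ξ)^β` -/
noncomputable def mAt {n : ℕ} (ξ : Fin n → ℂ) (β : Fin n → ℕ) : MvPolynomial (Fin n) ℂ :=
  ∏ i, (X i - C (ξ i)) ^ β i

theorem sub_single_eq_update {n : ℕ} (β : Fin n → ℕ) (j : Fin n) :
    β - Pi.single j 1 = Function.update β j (β j - 1) := by
  funext i
  rcases eq_or_ne i j with rfl | hij
  · simp
  · simp [Pi.single_eq_of_ne hij, Function.update_of_ne hij]

theorem sub_single_add_one {n : ℕ} {β : Fin n → ℕ} {j : Fin n} (h : β j ≠ 0) :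
    (β - Pi.single j 1) + Pi.single j 1 = β := by
  funext i
  rcases eq_or_ne i j with rfl | hij
  · simp [Nat.sub_add_cancel (Nat.one_le_iff_ne_zero.mpr h)]
  · simp [Pi.single_eq_of_ne hij]

theorem sum_sub_single {n : ℕ} {β : Fin n → ℕ} {j : Fin n} (h : β j ≠ 0) :
    (∑ i, (β - Pi.single j 1 : Fin n → ℕ) i) + 1 = ∑ i, β i := by
  rw [sub_single_eq_update]
  rw [Finset.sum_update_of_mem (Finset.mem_univ j)]
  rw [← Finset.add_sum_erase Finset.univ β (Finset.mem_univ j)]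
  rw [show (Finset.univ : Finset (Fin n)) \ {j} = Finset.univ.erase j by
    rw [Finset.erase_eq]]
  omega

theorem pderiv_prod_eq_zero {n : ℕ} (ξ : Fin n → ℂ) (β : Fin n → ℕ) (j : Fin n)
    (s : Finset (Fin n)) (hj : j ∉ s) :
    MvPolynomial.pderiv j (∏ i ∈ s, (X i - C (ξ i)) ^ β i) = 0 := by
  induction s using Finset.induction_on with
  | empty => simp [MvPolynomial.pderiv_one]
  | @insert a s' hx ih =>
    rw [Finset.prod_insert hx, pderiv_mul, ih (fun hs => hj (Finset.mem_insert_of_mem hs)),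
      pderiv_pow]
    have haj : a ≠ j := fun hh => hj (hh ▸ Finset.mem_insert_self a s')
    have : MvPolynomial.pderiv j (X a - C (ξ a)) = 0 := by
      rw [map_sub, pderiv_X_of_ne haj, pderiv_C, sub_zero]
    rw [this]
    ring

theorem pderiv_mAt {n : ℕ} (ξ : Fin n → ℂ) (β : Fin n → ℕ) (j : Fin n) :
    MvPolynomial.pderiv j (mAt ξ β) =
      (β j : MvPolynomial (Fin n) ℂ) * mAt ξ (β - Pi.single j 1) := by
  rw [mAt, ← Finset.mul_prod_erase Finset.univ _ (Finset.mem_univ j), pderiv_mul,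
    pderiv_prod_eq_zero ξ β j _ (Finset.notMem_erase j _), mul_zero, add_zero, pderiv_pow]
  have hX : MvPolynomial.pderiv j (X j - C (ξ j)) = 1 := by
    rw [map_sub, pderiv_X_self, pderiv_C, sub_zero]
  rw [hX, mul_one, mAt, ← Finset.mul_prod_erase Finset.univ _ (Finset.mem_univ j)]
  have h1 : (β - Pi.single j 1 : Fin n → ℕ) j = β j - 1 := by
    rw [sub_single_eq_update, Function.update_self]
  have h2 : ∀ i ∈ Finset.univ.erase j, (X i - C (ξ i)) ^ (β - Pi.single j 1 : Fin n → ℕ) i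
      = (X i - C (ξ i)) ^ β i := by
    intro i hi
    rw [sub_single_eq_update, Function.update_of_ne (Finset.ne_of_mem_erase hi)]
  rw [Finset.prod_congr rfl h2, h1]
  ring

theorem eval_mAt {n : ℕ} (ξ : Fin n → ℂ) (β : Fin n → ℕ) :
    MvPolynomial.eval ξ (mAt ξ β) = if β = 0 then 1 else 0 := by
  rw [mAt]
  rw [map_prod]
  rcases eq_or_ne β 0 with rfl | hβ
  · simp
  · obtain ⟨j, hj⟩ : ∃ j, β j ≠ 0 := by
      by_contra h
      push_neg at h
      exact hβ (funext h)
    rw [if_neg hβ]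
    apply Finset.prod_eq_zero (Finset.mem_univ j)
    rw [map_pow, map_sub, eval_X, eval_C, sub_self, zero_pow hj]

/-- the factorial of a multi-index -/
def mfact {n : ℕ} (β : Fin n → ℕ) : ℕ := ∏ i, (β i).factorial

theorem mfact_ne_zero {n : ℕ} (β : Fin n → ℕ) : mfact β ≠ 0 :=
  Finset.prod_ne_zero_iff.mpr fun i _ => (Nat.factorial_pos (β i)).ne'

theorem mfact_sub {n : ℕ} {β : Fin n → ℕ} {j : Fin n} (h : β j ≠ 0) :
    β j * mfact (β - Pi.single j 1) = mfact β := by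
  have key : ∀ δ : Fin n → ℕ, δ = β - Pi.single j 1 → β j * mfact δ = mfact β := by
    intro δ hδ
    rw [mfact, mfact,
      ← Finset.mul_prod_erase Finset.univ (fun i => (β i).factorial) (Finset.mem_univ j),
      ← Finset.mul_prod_erase Finset.univ (fun i => (δ i).factorial) (Finset.mem_univ j)]
    have h2 : ∀ i ∈ Finset.univ.erase j, (δ i).factorial = (β i).factorial := by
      intro i hi
      rw [hδ, sub_single_eq_update, Function.update_of_ne (Finset.ne_of_mem_erase hi)]
    have h1 : δ j = β j - 1 := by rw [hδ, sub_single_eq_update, Function.update_self]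
    rw [Finset.prod_congr rfl h2, h1, ← mul_assoc, Nat.mul_factorial_pred h]
  exact key _ rfl

theorem diffAt_mAt {n : ℕ} (ξ : Fin n → ℂ) (γ β : Fin n → ℕ) :
    diffAt ξ γ (mAt ξ β) = if γ = β then (mfact β : ℂ) else 0 := by
  -- strong induction on ∑ γ
  generalize hk : (∑ i, γ i) = k
  induction k using Nat.strong_induction_on generalizing γ β with
  | _ k ih =>
  rcases eq_or_ne γ 0 with rfl | hγ
  · rw [diffAt_zero_apply, eval_mAt]
    rcases eq_or_ne β 0 with rfl | hβ
    · simp [mfact]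
    · rw [if_neg hβ, if_neg (Ne.symm hβ)]
  · obtain ⟨j, hj⟩ : ∃ j, γ j ≠ 0 := by
      by_contra h
      push_neg at h
      exact hγ (funext h)
    have hsum := sum_sub_single (β := γ) hj
    have hγeq := sub_single_add_one (β := γ) hj
    have step : diffAt ξ γ (mAt ξ β)
        = (β j : ℂ) * diffAt ξ (γ - Pi.single j 1) (mAt ξ (β - Pi.single j 1)) := by
      conv_lhs => rw [← hγeq]
      rw [diffAt_add_single, pderiv_mAt, ← nsmul_eq_mul, map_nsmul, nsmul_eq_mul]
    rw [step]
    rcases eq_or_ne (β j) 0 with hbj | hbj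
    · have hne : γ ≠ β := fun h => hj (h ▸ hbj)
      rw [if_neg hne, hbj]
      simp
    · have hlt : ∑ i, (γ - Pi.single j 1 : Fin n → ℕ) i < k := by omega
      rw [ih _ hlt _ _ rfl]
      rcases eq_or_ne γ β with rfl | hne
      · rw [if_pos rfl, if_pos rfl, ← mfact_sub hbj]
        push_cast
        ring
      · have hne2 : γ - Pi.single j 1 ≠ β - Pi.single j 1 := by
          intro h
          exact hne (by rw [← hγeq, h, sub_single_add_one hbj])
        rw [if_neg hne2, if_neg hne, mul_zero]

/-- precomposition by `∂_j` on dual space -/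
noncomputable def precompPd {n : ℕ} (j : Fin n) :
    Module.Dual ℂ (MvPolynomial (Fin n) ℂ) →ₗ[ℂ] Module.Dual ℂ (MvPolynomial (Fin n) ℂ) :=
  LinearMap.lcomp ℂ ℂ (MvPolynomial.pderiv j).toLinearMap

theorem precompPd_diffAt {n : ℕ} (ξ : Fin n → ℂ) (j : Fin n) (δ : Fin n → ℕ) :
    precompPd j (diffAt ξ δ) = diffAt ξ (δ + Pi.single j 1) :=
  LinearMap.ext fun p => (diffAt_add_single ξ δ j p).symm

theorem sum_lt_sum_of_lt {n : ℕ} {δ γ : Fin n → ℕ} (h : δ < γ) : ∑ i, δ i < ∑ i, γ i := by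
  rw [Pi.lt_def] at h
  obtain ⟨hle, i, hi⟩ := h
  exact Finset.sum_lt_sum (fun i _ => hle i) ⟨i, Finset.mem_univ i, hi⟩

theorem sub_single_lt {n : ℕ} {γ : Fin n → ℕ} {j : Fin n} (h : γ j ≠ 0) :
    (γ - Pi.single j 1 : Fin n → ℕ) < γ := by
  rw [Pi.lt_def]
  constructor
  · intro i; simp only [Pi.sub_apply]; omega
  · exact ⟨j, by simp only [Pi.sub_apply, Pi.single_eq_same]; omega⟩

theorem lt_add_single {n : ℕ} (γ : Fin n → ℕ) (j : Fin n) : γ < γ + Pi.single j 1 := by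
  rw [Pi.lt_def]
  constructor
  · intro i; simp only [Pi.add_apply]; omega
  · exact ⟨j, by simp only [Pi.add_apply, Pi.single_eq_same]; omega⟩

theorem add_single_lt_add_single {n : ℕ} {δ γ : Fin n → ℕ} (h : δ < γ) (j : Fin n) :
    δ + Pi.single j 1 < γ + Pi.single j 1 := by
  rw [Pi.lt_def] at h ⊢
  obtain ⟨hle, i, hi⟩ := h
  exact ⟨fun i' => by simp only [Pi.add_apply]; exact Nat.add_le_add_right (hle i') _,
    ⟨i, by simp only [Pi.add_apply]; exact Nat.add_lt_add_right hi _⟩⟩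

/-- The key structural Leibniz lemma. -/
theorem diffAt_comp_mul {n : ℕ} (ξ : Fin n → ℂ) (γ : Fin n → ℕ) (g : MvPolynomial (Fin n) ℂ) :
    (diffAt ξ γ).comp (LinearMap.mulLeft ℂ g) - MvPolynomial.eval ξ g • diffAt ξ γ ∈
      Submodule.span ℂ {Λ | ∃ δ : Fin n → ℕ, δ < γ ∧ Λ = diffAt ξ δ} := by
  generalize hk : ∑ i, γ i = k
  induction k using Nat.strong_induction_on generalizing γ g with
  | _ k ih =>
  rcases eq_or_ne γ 0 with rfl | hγ
  · have : (diffAt ξ (0 : Fin n → ℕ)).comp (LinearMap.mulLeft ℂ g)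
        = MvPolynomial.eval ξ g • diffAt ξ 0 := by
      refine LinearMap.ext fun p => ?_
      simp only [LinearMap.comp_apply, LinearMap.mulLeft_apply, LinearMap.smul_apply,
        diffAt_zero_apply, smul_eq_mul, map_mul]
    rw [this, sub_self]
    exact zero_mem _
  · obtain ⟨j, hj⟩ : ∃ j, γ j ≠ 0 := by
      by_contra h
      push_neg at h
      exact hγ (funext h)
    set γ' : Fin n → ℕ := γ - Pi.single j 1 with hγ'
    have hγeq : γ' + Pi.single j 1 = γ := sub_single_add_one hj
    have hPj : precompPd j (diffAt ξ γ') = diffAt ξ γ := by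
      rw [precompPd_diffAt, hγeq]
    have expand : (diffAt ξ γ).comp (LinearMap.mulLeft ℂ g) =
        (diffAt ξ γ').comp (LinearMap.mulLeft ℂ (MvPolynomial.pderiv j g)) +
          precompPd j ((diffAt ξ γ').comp (LinearMap.mulLeft ℂ g)) := by
      refine LinearMap.ext fun p => ?_
      simp only [LinearMap.comp_apply, LinearMap.mulLeft_apply, LinearMap.add_apply,
        precompPd, LinearMap.lcomp_apply]
      rw [← hγeq, diffAt_add_single, pderiv_mul, map_add]
      rfl
    have main : (diffAt ξ γ).comp (LinearMap.mulLeft ℂ g) - MvPolynomial.eval ξ g • diffAt ξ γ =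
        ((diffAt ξ γ').comp (LinearMap.mulLeft ℂ (MvPolynomial.pderiv j g))
            - MvPolynomial.eval ξ (MvPolynomial.pderiv j g) • diffAt ξ γ')
          + MvPolynomial.eval ξ (MvPolynomial.pderiv j g) • diffAt ξ γ'
          + precompPd j ((diffAt ξ γ').comp (LinearMap.mulLeft ℂ g)
              - MvPolynomial.eval ξ g • diffAt ξ γ') := by
      rw [expand, map_sub, map_smul, hPj]
      abel
    rw [main]
    have hklt : ∑ i, γ' i < k := by
      have h2 : (∑ i, γ' i) + 1 = ∑ i, γ i := sum_sub_single hj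
      omega
    have mem1 := ih _ hklt γ' (MvPolynomial.pderiv j g) rfl
    have mem2 := ih _ hklt γ' g rfl
    have hsub : Submodule.span ℂ {Λ | ∃ δ : Fin n → ℕ, δ < γ' ∧ Λ = diffAt ξ δ} ≤
        Submodule.span ℂ {Λ | ∃ δ : Fin n → ℕ, δ < γ ∧ Λ = diffAt ξ δ} := by
      apply Submodule.span_mono
      rintro Λ ⟨δ, hδ, rfl⟩
      exact ⟨δ, lt_of_lt_of_le hδ (le_of_lt (hγeq ▸ lt_add_single γ' j)), rfl⟩
    refine add_mem (add_mem (hsub mem1) ?_) ?_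
    · exact Submodule.smul_mem _ _ (Submodule.subset_span ⟨γ', hγeq ▸ lt_add_single γ' j, rfl⟩)
    · have : precompPd j ((diffAt ξ γ').comp (LinearMap.mulLeft ℂ g)
          - MvPolynomial.eval ξ g • diffAt ξ γ') ∈
          Submodule.map (precompPd j)
            (Submodule.span ℂ {Λ | ∃ δ : Fin n → ℕ, δ < γ' ∧ Λ = diffAt ξ δ}) :=
        Submodule.mem_map_of_mem mem2
      rw [Submodule.map_span] at this
      refine Submodule.span_le.mpr ?_ this
      rintro Λ ⟨Λ', ⟨δ, hδ, rfl⟩, rfl⟩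
      exact Submodule.subset_span
        ⟨δ + Pi.single j 1, hγeq ▸ add_single_lt_add_single hδ j, (precompPd_diffAt ξ j δ)⟩

-- members of a span all of whose generators kill p, kill p
theorem span_apply_zero {n : ℕ} {S : Set (Module.Dual ℂ (MvPolynomial (Fin n) ℂ))}
    {p : MvPolynomial (Fin n) ℂ} (h : ∀ Λ ∈ S, Λ p = 0) :
    ∀ Λ ∈ Submodule.span ℂ S, Λ p = 0 := by
  intro Λ hΛ
  have hle : Submodule.span ℂ S ≤ LinearMap.ker (LinearMap.applyₗ (R := ℂ) p) := by
    rw [Submodule.span_le]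
    intro Λ' hΛ'
    exact LinearMap.mem_ker.mpr (h Λ' hΛ')
  exact LinearMap.mem_ker.mp (hle hΛ)

/-- Claim D : pairing of a low-order derivative against `g * (x-ξ)^α`. -/
theorem diffAt_mul_mAt {n : ℕ} (ξ : Fin n → ℂ) {γ α : Fin n → ℕ}
    (hle : ∑ i, γ i ≤ ∑ i, α i) (g : MvPolynomial (Fin n) ℂ) :
    diffAt ξ γ (g * mAt ξ α) =
      if γ = α then MvPolynomial.eval ξ g * (mfact α : ℂ) else 0 := by
  have h := diffAt_comp_mul ξ γ g
  have hz : ((diffAt ξ γ).comp (LinearMap.mulLeft ℂ g)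
      - MvPolynomial.eval ξ g • diffAt ξ γ) (mAt ξ α) = 0 := by
    refine span_apply_zero ?_ _ h
    rintro Λ ⟨δ, hδ, rfl⟩
    rw [diffAt_mAt, if_neg]
    rintro rfl
    have := sum_lt_sum_of_lt hδ
    omega
  simp only [LinearMap.sub_apply, LinearMap.comp_apply, LinearMap.mulLeft_apply,
    LinearMap.smul_apply, smul_eq_mul, sub_eq_zero] at hz
  rw [hz, diffAt_mAt]
  rcases eq_or_ne γ α with rfl | hne
  · rw [if_pos rfl, if_pos rfl]
  · rw [if_neg hne, if_neg hne, mul_zero]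

theorem finsupp_apply_mAt {n : ℕ} (ξ : Fin n → ℂ) (c : (Fin n → ℕ) →₀ ℂ) (β : Fin n → ℕ) :
    (c.sum fun γ a => a • diffAt ξ γ) (mAt ξ β) = c β * (mfact β : ℂ) := by
  rw [Finsupp.sum, LinearMap.sum_apply]
  have hterm : ∀ γ ∈ c.support, (c γ • diffAt ξ γ) (mAt ξ β)
      = if γ = β then c γ * (mfact β : ℂ) else 0 := by
    intro γ _
    rw [LinearMap.smul_apply, smul_eq_mul, diffAt_mAt, mul_ite, mul_zero]
  rw [Finset.sum_congr rfl hterm, Finset.sum_ite_eq' c.support β (fun γ => c γ * (mfact β : ℂ))]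
  by_cases hβ : β ∈ c.support
  · rw [if_pos hβ]
  · rw [if_neg hβ, Finsupp.notMem_support_iff.mp hβ, zero_mul]

theorem mem_perp_span {n : ℕ} {S : Set (MvPolynomial (Fin n) ℂ)}
    {Λ : Module.Dual ℂ (MvPolynomial (Fin n) ℂ)}
    (h : ∀ (g : MvPolynomial (Fin n) ℂ), ∀ s ∈ S, Λ (g * s) = 0) :
    Λ ∈ perp (Ideal.span S) := by
  rw [perp, Submodule.mem_dualAnnihilator]
  intro q hq
  rw [Submodule.restrictScalars_mem] at hq
  have key : ∀ q ∈ Ideal.span S, ∀ g : MvPolynomial (Fin n) ℂ, Λ (g * q) = 0 := by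
    intro q hq
    refine Submodule.span_induction ?_ ?_ ?_ ?_ hq
    · intro s hs g; exact h g s hs
    · intro g; rw [mul_zero, map_zero]
    · intro x y _ _ hx hy g; rw [mul_add, map_add, hx, hy, add_zero]
    · intro r x _ hx g
      rw [smul_eq_mul, show g * (r * x) = (g * r) * x by ring]
      exact hx (g * r)
  have := key q hq 1
  rwa [one_mul] at this

theorem perp_apply_zero {n : ℕ} {J : Ideal (MvPolynomial (Fin n) ℂ)}
    {Λ : Module.Dual ℂ (MvPolynomial (Fin n) ℂ)} (h : Λ ∈ perp J)
    {q : MvPolynomial (Fin n) ℂ} (hq : q ∈ J) : Λ q = 0 := by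
  rw [perp, Submodule.mem_dualAnnihilator] at h
  exact h q (Submodule.restrictScalars_mem ℂ J q |>.mpr hq)

theorem ordSpan_finite {n : ℕ} (ξ : Fin n → ℂ) (t : ℕ) :
    Set.Finite {Λ : Module.Dual ℂ (MvPolynomial (Fin n) ℂ) |
      ∃ β : Fin n → ℕ, (∑ i, β i) ≤ t ∧ Λ = diffAt ξ β} := by
  have h1 : {Λ : Module.Dual ℂ (MvPolynomial (Fin n) ℂ) |
      ∃ β : Fin n → ℕ, (∑ i, β i) ≤ t ∧ Λ = diffAt ξ β}
      = (fun β : Fin n → ℕ => diffAt ξ β) '' {β | (∑ i, β i) ≤ t} := by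
    ext Λ
    simp only [Set.mem_setOf_eq, Set.mem_image]
    exact ⟨fun ⟨β, h1, h2⟩ => ⟨β, h1, h2.symm⟩, fun ⟨β, h1, h2⟩ => ⟨β, h1, h2.symm⟩⟩
  rw [h1]
  refine Set.Finite.image _ (Set.Finite.subset (Set.Finite.pi
    (fun i : Fin n => Set.finite_Iic t)) ?_)
  intro β hβ
  rw [Set.mem_pi]
  intro i _
  have : β i ≤ ∑ i', β i' := Finset.single_le_sum (fun i' _ => Nat.zero_le _) (Finset.mem_univ i)
  exact Set.mem_Iic.mpr (le_trans this hβ)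


theorem perp_mono {n : ℕ} {J J' : Ideal (MvPolynomial (Fin n) ℂ)} (h : J ≤ J') :
    perp J' ≤ perp J := by
  intro φ hφ
  rw [perp, Submodule.mem_dualAnnihilator] at hφ ⊢
  intro w hw
  rw [Submodule.restrictScalars_mem] at hw
  exact hφ w (Submodule.restrictScalars_mem ℂ J' w |>.mpr (h hw))

theorem ordSpan_le_polyDiffOps {n : ℕ} (ξ : Fin n → ℂ) (t : ℕ) :
    Submodule.span ℂ {Λ | ∃ β : Fin n → ℕ, (∑ i, β i) ≤ t ∧ Λ = diffAt ξ β} ≤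
      polyDiffOps ξ := by
  apply Submodule.span_le.mpr
  rintro Λ ⟨β, _, rfl⟩
  exact Submodule.subset_span ⟨β, rfl⟩

theorem dt_le_dfull {n : ℕ} (ξ : Fin n → ℂ) (J : Ideal (MvPolynomial (Fin n) ℂ)) (t : ℕ) :
    Dt ξ J t ≤ Dfull ξ J :=
  inf_le_inf_left _ (ordSpan_le_polyDiffOps ξ t)

theorem ord_apply_zero {n : ℕ} {ξ : Fin n → ℂ} {t : ℕ}
    {Λ : Module.Dual ℂ (MvPolynomial (Fin n) ℂ)}
    (h : Λ ∈ Submodule.span ℂ {Λ | ∃ β : Fin n → ℕ, (∑ i, β i) ≤ t ∧ Λ = diffAt ξ β})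
    {β : Fin n → ℕ} (hβ : t < ∑ i, β i) : Λ (mAt ξ β) = 0 := by
  refine span_apply_zero ?_ Λ h
  rintro Λ' ⟨γ, hγ, rfl⟩
  rw [diffAt_mAt, if_neg]
  rintro rfl
  omega

theorem precompPd_mem {n : ℕ} {ξ : Fin n → ℂ} (j : Fin n)
    {Λ : Module.Dual ℂ (MvPolynomial (Fin n) ℂ)} (h : Λ ∈ polyDiffOps ξ) :
    precompPd j Λ ∈ polyDiffOps ξ := by
  have h2 : precompPd j Λ ∈ Submodule.map (precompPd j) (polyDiffOps ξ) :=
    Submodule.mem_map_of_mem h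
  rw [polyDiffOps, Submodule.map_span] at h2
  refine Submodule.span_le.mpr ?_ h2
  rintro Λ' ⟨Λ'', ⟨δ, rfl⟩, rfl⟩
  exact Submodule.subset_span ⟨δ + Pi.single j 1, (precompPd_diffAt ξ j δ).symm⟩

theorem diffAt_comp_mul_mem {n : ℕ} (ξ : Fin n → ℂ) (γ : Fin n → ℕ)
    (g : MvPolynomial (Fin n) ℂ) :
    (diffAt ξ γ).comp (LinearMap.mulLeft ℂ g) ∈ polyDiffOps ξ := by
  have h := diffAt_comp_mul ξ γ g
  have h2 : (diffAt ξ γ).comp (LinearMap.mulLeft ℂ g)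
      = ((diffAt ξ γ).comp (LinearMap.mulLeft ℂ g)
          - MvPolynomial.eval ξ g • diffAt ξ γ) + MvPolynomial.eval ξ g • diffAt ξ γ := by
    abel
  rw [h2]
  refine add_mem ?_ (Submodule.smul_mem _ _ (Submodule.subset_span ⟨γ, rfl⟩))
  have hle : Submodule.span ℂ {Λ | ∃ δ : Fin n → ℕ, δ < γ ∧ Λ = diffAt ξ δ} ≤ polyDiffOps ξ := by
    apply Submodule.span_le.mpr
    rintro Λ ⟨δ, _, rfl⟩
    exact Submodule.subset_span ⟨δ, rfl⟩
  exact hle h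

theorem diffAt_single_apply {n : ℕ} (ξ : Fin n → ℂ) (j : Fin n) (p : MvPolynomial (Fin n) ℂ) :
    diffAt ξ (Pi.single j 1) p = MvPolynomial.eval ξ (MvPolynomial.pderiv j p) := by
  have := diffAt_add_single ξ 0 j p
  rw [zero_add] at this
  rw [this, diffAt_zero_apply]

theorem mfact_single {n : ℕ} (j : Fin n) : mfact (Pi.single j 1 : Fin n → ℕ) = 1 := by
  rw [mfact]
  apply Finset.prod_eq_one
  intro i _
  rcases eq_or_ne i j with rfl | hij
  · simp
  · rw [Pi.single_eq_of_ne hij]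
    rfl

theorem single_injective_ne {n : ℕ} {j j' : Fin n} (h : j ≠ j') :
    (Pi.single j 1 : Fin n → ℕ) ≠ Pi.single j' 1 := by
  intro heq
  have := congrFun heq j
  rw [Pi.single_eq_same] at this
  rw [Pi.single_eq_of_ne h] at this
  exact one_ne_zero this

theorem add_sub_single_cancel {n : ℕ} (γ : Fin n → ℕ) (j : Fin n) :
    (γ + Pi.single j 1 : Fin n → ℕ) - Pi.single j 1 = γ := by
  funext i
  simp only [Pi.sub_apply, Pi.add_apply, Nat.add_sub_cancel]


/-- One step of order-`1` deflation strictly decreases the nil-index `o_ξ` and the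
multiplicity `δ_ξ`, while keeping `ξ` a root (`δ_ξ(f^{(1)}) ≥ 1`). -/
theorem deflation_decreases_nil_index_and_multiplicity {n N m : ℕ}
    (f : Fin N → MvPolynomial (Fin n) ℂ) (ξ : Fin n → ℂ)
    (hroot : ∀ k, MvPolynomial.eval ξ (f k) = 0)
    (hiso : ∃ U ∈ nhds ξ, ∀ x ∈ U, (∀ k, MvPolynomial.eval x (f k) = 0) → x = ξ)
    (hm : 0 < m) (lam : Fin m → Fin n → MvPolynomial (Fin n) ℂ)
    -- the values at ξ of the coefficient vectors are nonzero kernel elements of J_f(ξ)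
    (hker : ∀ i k, ∑ j, MvPolynomial.eval ξ (lam i j) *
      MvPolynomial.eval ξ (MvPolynomial.pderiv j (f k)) = 0)
    (hne : ∀ i, (fun j => MvPolynomial.eval ξ (lam i j)) ≠ 0)
    (f1 : Fin N ⊕ (Fin m × Fin N) → MvPolynomial (Fin n) ℂ)
    (hf1 : f1 = Sum.elim f fun ik => ∑ j, lam ik.1 j * MvPolynomial.pderiv j (f ik.2))
    (I I1 : Ideal (MvPolynomial (Fin n) ℂ))
    (hI : I = Ideal.span (Set.range f)) (hI1 : I1 = Ideal.span (Set.range f1))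
    (o o1 : ℕ)
    (ho : Dt ξ I o = Dfull ξ I) (homin : ∀ t, Dt ξ I t = Dfull ξ I → o ≤ t)
    (ho1 : Dt ξ I1 o1 = Dfull ξ I1) (ho1min : ∀ t, Dt ξ I1 t = Dfull ξ I1 → o1 ≤ t) :
    o1 < o ∧
    1 ≤ Module.finrank ℂ (Dfull ξ I1) ∧
    Module.finrank ℂ (Dfull ξ I1) < Module.finrank ℂ (Dfull ξ I) := by
  classical
  -- notation
  set i0 : Fin m := ⟨0, hm⟩ with hi0
  set v : Fin n → ℂ := fun j => MvPolynomial.eval ξ (lam i0 j) with hv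
  obtain ⟨j0, hj0⟩ : ∃ j0, v j0 ≠ 0 := Function.ne_iff.mp (hne i0)
  have hf1inl : ∀ k, f1 (Sum.inl k) = f k := fun k => by rw [hf1]; rfl
  have hf1inr : ∀ k, f1 (Sum.inr (i0, k)) = ∑ j, lam i0 j * MvPolynomial.pderiv j (f k) :=
    fun k => by rw [hf1]; rfl
  have hIle : I ≤ I1 := by
    rw [hI, hI1]
    apply Ideal.span_mono
    rintro _ ⟨k, rfl⟩
    exact ⟨Sum.inl k, hf1inl k⟩
  have hDle : Dfull ξ I1 ≤ Dfull ξ I := inf_le_inf_right _ (perp_mono hIle)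
  -- eval at ξ kills all elements of I1
  have hval1 : ∀ k', MvPolynomial.eval ξ (f1 k') = 0 := by
    rintro (k | ⟨i, k⟩)
    · rw [hf1inl]; exact hroot k
    · have : f1 (Sum.inr (i, k)) = ∑ j, lam i j * MvPolynomial.pderiv j (f k) := by
        rw [hf1]; rfl
      rw [this, map_sum]
      simpa using hker i k
  -- Step 1 : o ≥ 1
  have ho_pos : 1 ≤ o := by
    by_contra hcon
    push_neg at hcon
    interval_cases o
    set Λ₁ : Module.Dual ℂ (MvPolynomial (Fin n) ℂ) :=
      ∑ j, v j • diffAt ξ (Pi.single j 1) with hΛ₁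
    have hΛ₁perp : Λ₁ ∈ perp I := by
      rw [hI]
      apply mem_perp_span
      rintro g _ ⟨k, rfl⟩
      rw [hΛ₁, LinearMap.sum_apply]
      have hterm : ∀ j, (v j • diffAt ξ (Pi.single j 1)) (g * f k)
          = v j * MvPolynomial.eval ξ g * MvPolynomial.eval ξ (MvPolynomial.pderiv j (f k)) := by
        intro j
        rw [LinearMap.smul_apply, smul_eq_mul, diffAt_single_apply, pderiv_mul, map_add,
          map_mul, map_mul, hroot k, mul_zero, zero_add]
        ring
      rw [Finset.sum_congr rfl fun j _ => hterm j]
      have : ∑ j, v j * MvPolynomial.eval ξ g * MvPolynomial.eval ξ (MvPolynomial.pderiv j (f k))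
          = MvPolynomial.eval ξ g *
            ∑ j, MvPolynomial.eval ξ (lam i0 j) *
              MvPolynomial.eval ξ (MvPolynomial.pderiv j (f k)) := by
        rw [Finset.mul_sum]
        exact Finset.sum_congr rfl fun j _ => by rw [hv]; ring
      rw [this, hker i0 k, mul_zero]
    have hΛ₁poly : Λ₁ ∈ polyDiffOps ξ := by
      apply Submodule.sum_mem
      intro j _
      exact Submodule.smul_mem _ _ (Submodule.subset_span ⟨Pi.single j 1, rfl⟩)
    have hΛ₁mem : Λ₁ ∈ Dfull ξ I := Submodule.mem_inf.mpr ⟨hΛ₁perp, hΛ₁poly⟩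
    rw [← ho] at hΛ₁mem
    have hord := (Submodule.mem_inf.mp hΛ₁mem).2
    have hzero := ord_apply_zero hord (β := Pi.single j0 1)
      (by rw [Finset.sum_pi_single']; simp)
    rw [hΛ₁, LinearMap.sum_apply] at hzero
    have hterm : ∀ j, (v j • diffAt ξ (Pi.single j 1)) (mAt ξ (Pi.single j0 1))
        = if j = j0 then v j else 0 := by
      intro j
      rw [LinearMap.smul_apply, smul_eq_mul, diffAt_mAt]
      rcases eq_or_ne j j0 with rfl | hjj
      · rw [if_pos rfl, if_pos rfl, mfact_single, Nat.cast_one, mul_one]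
      · rw [if_neg (single_injective_ne hjj), if_neg hjj, mul_zero]
    rw [Finset.sum_congr rfl fun j _ => hterm j, Finset.sum_ite_eq' Finset.univ j0 v,
      if_pos (Finset.mem_univ j0)] at hzero
    exact hj0 hzero
  -- Step 3+4 : the key vanishing property for members of Dfull ξ I1
  have key : ∀ Λ ∈ Dfull ξ I1, ∀ β : Fin n → ℕ, o ≤ ∑ i, β i → Λ (mAt ξ β) = 0 := by
    intro Λ hΛ
    have hΛperp1 : Λ ∈ perp I1 := (Submodule.mem_inf.mp hΛ).1
    obtain ⟨c, hc⟩ := Finsupp.mem_span_range_iff_exists_finsupp.mp (Submodule.mem_inf.mp hΛ).2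
    have hcap : ∀ β, Λ (mAt ξ β) = c β * (mfact β : ℂ) := fun β => by
      rw [← hc]; exact finsupp_apply_mAt ξ c β
    have hΛI : Λ ∈ Dfull ξ I := hDle hΛ
    rw [← ho] at hΛI
    have hΛord := (Submodule.mem_inf.mp hΛI).2
    have hhigh : ∀ γ : Fin n → ℕ, o < ∑ i, γ i → c γ = 0 := by
      intro γ hγ
      have h0 := ord_apply_zero hΛord hγ
      rw [hcap] at h0
      rcases mul_eq_zero.mp h0 with h | h
      · exact h
      · exact absurd (Nat.cast_eq_zero.mp h) (mfact_ne_zero γ)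
    suffices htop : ∀ γ : Fin n → ℕ, (∑ i, γ i) = o → c γ = 0 by
      intro β hβ
      rw [hcap]
      rcases eq_or_lt_of_le hβ with heq | hlt'
      · rw [htop β heq.symm, zero_mul]
      · rw [hhigh β hlt', zero_mul]
    by_contra hcon
    push_neg at hcon
    obtain ⟨γ0, hγ0sum, hγ0ne⟩ := hcon
    -- the deflation operator
    set T : MvPolynomial (Fin n) ℂ →ₗ[ℂ] MvPolynomial (Fin n) ℂ :=
      ∑ j, (LinearMap.mulLeft ℂ (lam i0 j)).comp (MvPolynomial.pderiv j).toLinearMap with hT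
    have hTapp : ∀ p, T p = ∑ j, lam i0 j * MvPolynomial.pderiv j p := by
      intro p
      rw [hT, LinearMap.sum_apply]
      rfl
    set Θ := Λ.comp T with hΘ
    have hΘperp : Θ ∈ perp I := by
      rw [hI]
      apply mem_perp_span
      rintro g _ ⟨k, rfl⟩
      rw [hΘ, LinearMap.comp_apply, hTapp]
      have hsplit : (∑ j, lam i0 j * MvPolynomial.pderiv j (g * f k))
          = (∑ j, lam i0 j * MvPolynomial.pderiv j g) * f k
            + g * ∑ j, lam i0 j * MvPolynomial.pderiv j (f k) := by
        rw [Finset.sum_mul, Finset.mul_sum, ← Finset.sum_add_distrib]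
        refine Finset.sum_congr rfl fun j _ => ?_
        rw [pderiv_mul]
        ring
      rw [hsplit, map_add]
      have h1 : (∑ j, lam i0 j * MvPolynomial.pderiv j g) * f k ∈ I1 := by
        rw [hI1]
        exact Ideal.mul_mem_left _ _ (Ideal.subset_span ⟨Sum.inl k, hf1inl k⟩)
      have h2 : g * ∑ j, lam i0 j * MvPolynomial.pderiv j (f k) ∈ I1 := by
        rw [hI1]
        exact Ideal.mul_mem_left _ _ (Ideal.subset_span ⟨Sum.inr (i0, k), hf1inr k⟩)
      rw [perp_apply_zero hΛperp1 h1, perp_apply_zero hΛperp1 h2, add_zero]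
    have hΘpoly : Θ ∈ polyDiffOps ξ := by
      have hgen : ∀ γ : Fin n → ℕ, (diffAt ξ γ).comp T ∈ polyDiffOps ξ := by
        intro γ
        have hexp : (diffAt ξ γ).comp T
            = ∑ j, precompPd j ((diffAt ξ γ).comp (LinearMap.mulLeft ℂ (lam i0 j))) := by
          refine LinearMap.ext fun p => ?_
          rw [LinearMap.comp_apply, hTapp, map_sum, LinearMap.sum_apply]
          exact Finset.sum_congr rfl fun j _ => rfl
        rw [hexp]
        exact Submodule.sum_mem _ fun j _ => precompPd_mem j (diffAt_comp_mul_mem ξ γ (lam i0 j))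
      have hΘeq : Θ = c.sum fun γ a => a • ((diffAt ξ γ).comp T) := by
        refine LinearMap.ext fun p => ?_
        rw [hΘ, LinearMap.comp_apply, ← hc]
        simp only [Finsupp.sum, LinearMap.sum_apply]
        exact Finset.sum_congr rfl fun γ _ => rfl
      rw [hΘeq, Finsupp.sum]
      exact Submodule.sum_mem _ fun γ _ => Submodule.smul_mem _ _ (hgen γ)
    have hΘord : Θ ∈ Submodule.span ℂ
        {Λ | ∃ β : Fin n → ℕ, (∑ i, β i) ≤ o ∧ Λ = diffAt ξ β} := by
      have hmem : Θ ∈ Dt ξ I o := by rw [ho]; exact Submodule.mem_inf.mpr ⟨hΘperp, hΘpoly⟩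
      exact (Submodule.mem_inf.mp hmem).2
    -- the pairing formula
    have happly : ∀ (g : MvPolynomial (Fin n) ℂ) (α : Fin n → ℕ), (∑ i, α i) = o →
        Λ (g * mAt ξ α) = c α * (MvPolynomial.eval ξ g * (mfact α : ℂ)) := by
      intro g α hα
      rw [← hc, Finsupp.sum, LinearMap.sum_apply]
      have hterm : ∀ γ ∈ c.support, (c γ • diffAt ξ γ) (g * mAt ξ α)
          = if γ = α then c γ * (MvPolynomial.eval ξ g * (mfact α : ℂ)) else 0 := by
        intro γ hγ
        have hγle : ∑ i, γ i ≤ o := by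
          by_contra hgt
          push_neg at hgt
          exact Finsupp.mem_support_iff.mp hγ (hhigh γ hgt)
        rw [LinearMap.smul_apply, smul_eq_mul, diffAt_mul_mAt ξ (by omega) g, mul_ite, mul_zero]
      rw [Finset.sum_congr rfl hterm, Finset.sum_ite_eq' c.support α
        (fun γ => c γ * (MvPolynomial.eval ξ g * (mfact α : ℂ)))]
      by_cases hα' : α ∈ c.support
      · rw [if_pos hα']
      · rw [if_neg hα', Finsupp.notMem_support_iff.mp hα', zero_mul]
    -- the recurrence from Θ being of order ≤ o
    have hrec : ∀ β : Fin n → ℕ, (∑ i, β i) = o + 1 →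
        ∑ j, (β j : ℂ) * (c (β - Pi.single j 1) *
          (v j * (mfact (β - Pi.single j 1) : ℂ))) = 0 := by
      intro β hβ
      have h0 : Θ (mAt ξ β) = 0 := ord_apply_zero hΘord (by omega)
      rw [hΘ, LinearMap.comp_apply, hTapp, map_sum] at h0
      have hterm : ∀ j : Fin n, Λ (lam i0 j * MvPolynomial.pderiv j (mAt ξ β))
          = (β j : ℂ) * (c (β - Pi.single j 1) *
              (v j * (mfact (β - Pi.single j 1) : ℂ))) := by
        intro j
        rw [pderiv_mAt]
        rcases eq_or_ne (β j) 0 with hbj | hbj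
        · rw [hbj]
          simp
        · have hs : (∑ i, (β - Pi.single j 1 : Fin n → ℕ) i) = o := by
            have := sum_sub_single (β := β) (j := j) hbj
            omega
          have hmm : lam i0 j * ((β j : MvPolynomial (Fin n) ℂ) * mAt ξ (β - Pi.single j 1))
              = (β j) • (lam i0 j * mAt ξ (β - Pi.single j 1)) := by
            rw [nsmul_eq_mul]
            ring
          rw [hmm, map_nsmul, nsmul_eq_mul, happly _ _ hs, hv]
      rw [Finset.sum_congr rfl fun j _ => hterm j] at h0
      exact h0
    -- pick a maximal coefficient of top order and derive a contradiction
    set F := c.support.filter (fun γ => (∑ i, γ i) = o) with hF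
    have hFne : F.Nonempty :=
      ⟨γ0, Finset.mem_filter.mpr ⟨Finsupp.mem_support_iff.mpr hγ0ne, hγ0sum⟩⟩
    obtain ⟨γs, hγsF, hγsmax⟩ := F.exists_max_image (fun γ => γ j0) hFne
    set β := γs + Pi.single j0 1 with hβdef
    have hβsum : (∑ i, β i) = o + 1 := by
      have h1 : ∑ i, β i = (∑ i, γs i) + ∑ i, (Pi.single j0 1 : Fin n → ℕ) i := by
        rw [hβdef, ← Finset.sum_add_distrib]
        rfl
      rw [h1, Fintype.sum_pi_single' j0 1, (Finset.mem_filter.mp hγsF).2]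
    have h0 := hrec β hβsum
    have hterm0 : ∀ j ∈ Finset.univ, j ≠ j0 →
        (β j : ℂ) * (c (β - Pi.single j 1) *
          (v j * (mfact (β - Pi.single j 1) : ℂ))) = 0 := by
      intro j _ hjj
      rcases eq_or_ne (β j) 0 with hbj | hbj
      · rw [hbj, Nat.cast_zero, zero_mul]
      · have hc0 : c (β - Pi.single j 1) = 0 := by
          by_contra hc0
          have hδsum : (∑ i, (β - Pi.single j 1 : Fin n → ℕ) i) = o := by
            have := sum_sub_single (β := β) (j := j) hbj
            omega
          have hδF : (β - Pi.single j 1 : Fin n → ℕ) ∈ F :=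
            Finset.mem_filter.mpr ⟨Finsupp.mem_support_iff.mpr hc0, hδsum⟩
          have hle := hγsmax _ hδF
          have hval : (β - Pi.single j 1 : Fin n → ℕ) j0 = γs j0 + 1 := by
            have e2 : (Pi.single j 1 : Fin n → ℕ) j0 = 0 := Pi.single_eq_of_ne (Ne.symm hjj) 1
            have e3 : β j0 = γs j0 + 1 := by
              rw [hβdef]
              simp
            simp only [Pi.sub_apply, e2, e3, Nat.sub_zero]
          omega
        rw [hc0, zero_mul, mul_zero]
    rw [Finset.sum_eq_single_of_mem j0 (Finset.mem_univ j0) hterm0] at h0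
    have hβγs : (β - Pi.single j0 1 : Fin n → ℕ) = γs := by
      rw [hβdef]
      exact add_sub_single_cancel γs j0
    have hβj0 : β j0 = γs j0 + 1 := by
      rw [hβdef]
      simp
    rw [hβγs, hβj0] at h0
    have hcast : ((γs j0 + 1 : ℕ) : ℂ) ≠ 0 := Nat.cast_ne_zero.mpr (Nat.succ_ne_zero _)
    have hcγs : c γs ≠ 0 := Finsupp.mem_support_iff.mp (Finset.mem_filter.mp hγsF).1
    exact (mul_ne_zero hcast (mul_ne_zero hcγs (mul_ne_zero hj0
      (Nat.cast_ne_zero.mpr (mfact_ne_zero γs))))) h0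
  -- Step 5 : Dfull ξ I1 is contained in the span of operators of order ≤ o-1
  have step5 : ∀ Λ ∈ Dfull ξ I1,
      Λ ∈ Submodule.span ℂ {Λ | ∃ β : Fin n → ℕ, (∑ i, β i) ≤ o - 1 ∧ Λ = diffAt ξ β} := by
    intro Λ hΛ
    obtain ⟨c, hc⟩ := Finsupp.mem_span_range_iff_exists_finsupp.mp (Submodule.mem_inf.mp hΛ).2
    have hcap : ∀ β, Λ (mAt ξ β) = c β * (mfact β : ℂ) := fun β => by
      rw [← hc]; exact finsupp_apply_mAt ξ c β
    rw [← hc, Finsupp.sum]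
    apply Submodule.sum_mem
    intro γ hγ
    refine Submodule.smul_mem _ _ (Submodule.subset_span ⟨γ, ?_, rfl⟩)
    by_contra hdeg
    push_neg at hdeg
    have hge : o ≤ ∑ i, γ i := by omega
    have := key Λ hΛ γ hge
    rw [hcap γ] at this
    rcases mul_eq_zero.mp this with h | h
    · exact Finsupp.mem_support_iff.mp hγ h
    · exact mfact_ne_zero γ (Nat.cast_eq_zero.mp h)
  -- conclusion 1 : o1 < o
  have hDt1 : Dt ξ I1 (o - 1) = Dfull ξ I1 := by
    refine le_antisymm (dt_le_dfull ξ I1 (o - 1)) ?_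
    intro Λ hΛ
    exact Submodule.mem_inf.mpr ⟨(Submodule.mem_inf.mp hΛ).1, step5 Λ hΛ⟩
  have hlt : o1 < o := lt_of_le_of_lt (ho1min _ hDt1) (by omega)
  -- finite dimensionality
  have hfin : ∀ t : ℕ, FiniteDimensional ℂ
      (Submodule.span ℂ {Λ : Module.Dual ℂ (MvPolynomial (Fin n) ℂ) |
        ∃ β : Fin n → ℕ, (∑ i, β i) ≤ t ∧ Λ = diffAt ξ β}) :=
    fun t => FiniteDimensional.span_of_finite ℂ (ordSpan_finite ξ t)
  haveI hfinI : FiniteDimensional ℂ (Dfull ξ I) := by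
    haveI := hfin o
    have h1 : Dfull ξ I ≤ Submodule.span ℂ {Λ : Module.Dual ℂ (MvPolynomial (Fin n) ℂ) |
        ∃ β : Fin n → ℕ, (∑ i, β i) ≤ o ∧ Λ = diffAt ξ β} := by
      rw [← ho]
      exact inf_le_right
    exact Submodule.finiteDimensional_of_le h1
  haveI hfinI1 : FiniteDimensional ℂ (Dfull ξ I1) :=
    Submodule.finiteDimensional_of_le hDle
  -- conclusion 2 : 1 ≤ finrank
  have hev : diffAt ξ 0 ∈ Dfull ξ I1 := by
    refine Submodule.mem_inf.mpr ⟨?_, Submodule.subset_span ⟨0, rfl⟩⟩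
    rw [hI1]
    apply mem_perp_span
    rintro g _ ⟨k', rfl⟩
    rw [diffAt_zero_apply, map_mul, hval1 k', mul_zero]
  have hevne : diffAt ξ 0 ≠ 0 := by
    intro h
    have := diffAt_zero_apply ξ 1
    rw [h] at this
    simp at this
  have hrank1 : 1 ≤ Module.finrank ℂ (Dfull ξ I1) := by
    have : Nontrivial (Dfull ξ I1) := by
      refine ⟨⟨diffAt ξ 0, hev⟩, 0, ?_⟩
      intro h
      exact hevne (congrArg Subtype.val h)
    exact Module.finrank_pos_iff.mpr this
  -- conclusion 3 : strict inequality of multiplicities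
  have hneq : Dfull ξ I1 ≠ Dfull ξ I := by
    intro heq
    have h1 : Dt ξ I (o - 1) ≠ Dfull ξ I := fun h => by have := homin _ h; omega
    apply h1
    refine le_antisymm (dt_le_dfull ξ I (o - 1)) ?_
    intro Λ hΛ
    refine Submodule.mem_inf.mpr ⟨(Submodule.mem_inf.mp hΛ).1, ?_⟩
    rw [← heq] at hΛ
    exact step5 Λ hΛ
  exact ⟨hlt, hrank1, Submodule.finrank_lt_finrank_of_lt (lt_of_le_of_ne hDle hneq)⟩
end

section
/- Let K ⊆ ℂ, M_1(μ),...,M_n(μ) be the δ×δ parametric multiplication matrices with entries 0, 1, or variables μ_{α,β}, and N_{z,μ}(p) = Σ_γ (1/γ!)∂^γ_z(p)·M(μ)^γ[1] the parametric normal form. Then for every p ∈ K[x] and i = 1,...,n: N_{z,μ}(x_i·p) = x_i·N_{z,μ}(p) + M_i(μ)·N_{z,μ}(p) + O_{i,μ}(p), where p ↦ O_{i,μ}(p) is K-linear and takes values in the commutator ideal C generated by the entries of M_i(μ)M_j(μ) − M_j(μ)M_i(μ). -/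
open MvPolynomial

/-- `M^γ = M_1^{γ_1}···M_n^{γ_n}` (in this fixed order) for a family of matrices. -/
noncomputable def matPow {n δ : ℕ} {R : Type*} [CommRing R]
    (M : Fin n → Matrix (Fin δ) (Fin δ) R) (γ : Fin n → ℕ) : Matrix (Fin δ) (Fin δ) R :=
  (List.ofFn fun i : Fin n => (M i) ^ (γ i)).prod

lemma tail_update_zero {S : Type*} {n : ℕ} (f : Fin (n+1) → S) (y : S) :
    (List.ofFn fun j : Fin n => Function.update f 0 y j.succ)
      = List.ofFn fun j : Fin n => f j.succ := by
  refine congrArg List.ofFn (funext fun j => ?_)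
  rw [Function.update_of_ne (Fin.succ_ne_zero j)]

lemma tail_update_succ {S : Type*} {n : ℕ} (f : Fin (n+1) → S) (i' : Fin n) (y : S) :
    (List.ofFn fun j : Fin n => Function.update f i'.succ y j.succ)
      = List.ofFn (Function.update (fun j : Fin n => f j.succ) i' y) := by
  refine congrArg List.ofFn (funext fun j => ?_)
  by_cases hj : j = i'
  · subst hj; rw [Function.update_self, Function.update_self]
  · rw [Function.update_of_ne hj,
      Function.update_of_ne (fun h => hj (Fin.succ_inj.mp h))]

/-- General pull-through lemma for list products of `ofFn`. -/
lemma listG {S : Type*} [Ring S] : ∀ {n : ℕ} (f : Fin n → S) (i : Fin n) (L e : S),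
    (∀ j, j ≠ i → f j * L = L * f j) → (f i * L = L * f i + e) →
    (List.ofFn f).prod * L = L * (List.ofFn f).prod + (List.ofFn (Function.update f i e)).prod := by
  intro n
  induction n with
  | zero => exact fun f i => i.elim0
  | succ n ih =>
    intro f i L e hcomm hi
    rw [List.ofFn_succ, List.ofFn_succ, List.prod_cons, List.prod_cons]
    set T := (List.ofFn fun j : Fin n => f j.succ).prod with hT
    rcases Fin.eq_zero_or_eq_succ i with h0 | ⟨i', rfl⟩
    · subst h0
      have hrest : T * L = L * T := by
        refine (Commute.list_prod_right _ _ ?_).symm.eq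
        intro x hx
        rw [List.mem_ofFn] at hx
        obtain ⟨j, rfl⟩ := hx
        exact (hcomm j.succ (Fin.succ_ne_zero j)).symm
      rw [tail_update_zero, Function.update_self, ← hT]
      calc f 0 * T * L = f 0 * (T * L) := mul_assoc _ _ _
        _ = f 0 * (L * T) := by rw [hrest]
        _ = f 0 * L * T := (mul_assoc _ _ _).symm
        _ = (L * f 0 + e) * T := by rw [hi]
        _ = L * (f 0 * T) + e * T := by rw [add_mul, mul_assoc]
    · have h0 : f 0 * L = L * f 0 := hcomm 0 (Ne.symm (Fin.succ_ne_zero i'))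
      have key := ih (fun j => f j.succ) i' L e
        (fun j hj => hcomm j.succ (fun h => hj (Fin.succ_inj.mp h))) hi
      rw [Function.update_of_ne (Ne.symm (Fin.succ_ne_zero i')), tail_update_succ]
      set E := (List.ofFn (Function.update (fun j : Fin n => f j.succ) i' e)).prod with hE
      calc f 0 * T * L = f 0 * (T * L) := mul_assoc _ _ _
        _ = f 0 * (L * T + E) := by rw [key]
        _ = f 0 * L * T + f 0 * E := by rw [mul_add, mul_assoc]
        _ = L * (f 0 * T) + f 0 * E := by rw [h0, mul_assoc]

/-- Pull a scalar out of one entry of an `ofFn` product. -/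
lemma listS {S : Type*} [Ring S] {K : Type*} [CommSemiring K] [Module K S]
    [SMulCommClass K S S] [IsScalarTower K S S] :
    ∀ {n : ℕ} (f : Fin n → S) (i : Fin n) (k : K) (x : S),
    (List.ofFn (Function.update f i (k • x))).prod
      = k • (List.ofFn (Function.update f i x)).prod := by
  intro n
  induction n with
  | zero => exact fun f i => i.elim0
  | succ n ih =>
    intro f i k x
    rw [List.ofFn_succ, List.ofFn_succ, List.prod_cons, List.prod_cons]
    rcases Fin.eq_zero_or_eq_succ i with h0 | ⟨i', rfl⟩
    · subst h0
      rw [tail_update_zero, tail_update_zero, Function.update_self,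
        Function.update_self, smul_mul_assoc]
    · rw [Function.update_of_ne (Ne.symm (Fin.succ_ne_zero i')),
        Function.update_of_ne (Ne.symm (Fin.succ_ne_zero i')),
        tail_update_succ, tail_update_succ, ih, mul_smul_comm]

/-- Pull a commuting factor to the front of an `ofFn` product. -/
lemma listP {S : Type*} [Monoid S] : ∀ {n : ℕ} (f : Fin n → S) (i : Fin n) (x : S),
    (∀ j, Commute x (f j)) →
    (List.ofFn (Function.update f i (x * f i))).prod = x * (List.ofFn f).prod := by
  intro n
  induction n with
  | zero => exact fun f i => i.elim0
  | succ n ih =>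
    intro f i x hx
    rw [List.ofFn_succ, List.ofFn_succ, List.prod_cons, List.prod_cons]
    rcases Fin.eq_zero_or_eq_succ i with h0 | ⟨i', rfl⟩
    · subst h0
      rw [tail_update_zero, Function.update_self, mul_assoc]
    · rw [Function.update_of_ne (Ne.symm (Fin.succ_ne_zero i')), tail_update_succ,
        ih _ _ _ (fun j => hx j.succ), ← mul_assoc, ← (hx 0).eq, mul_assoc]

/-- `d^k * l = l * d^k + k • d^(k-1)` from `d * l = l * d + 1`. -/
lemma pow_comm_rule {S : Type*} [Ring S] (d l : S) (h : d * l = l * d + 1) :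
    ∀ k : ℕ, d ^ k * l = l * d ^ k + k • d ^ (k - 1) := by
  intro k
  induction k with
  | zero => simp
  | succ k ih =>
    have hd : d ^ (k+1) * l = l * d ^ (k+1) + (k • (d ^ (k-1) * d) + d ^ k) := by
      rw [pow_succ, mul_assoc, h, mul_add, mul_one, ← mul_assoc, ih, add_mul,
        smul_mul_assoc, mul_assoc, ← pow_succ, add_assoc]
    rw [hd]
    congr 1
    cases k with
    | zero => simp
    | succ k =>
      rw [Nat.succ_sub_one, Nat.succ_sub_one, ← pow_succ]
      exact (succ_nsmul _ (k+1)).symm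

/-- Product rule for iterated partial derivatives. -/
lemma pd_mul_X {n : ℕ} {K : Type*} [CommRing K] (γ : Fin n → ℕ) (i : Fin n)
    (p : MvPolynomial (Fin n) K) :
    pd γ (X i * p) = X i * pd γ p
      + (γ i) • pd (Function.update γ i (γ i - 1)) p := by
  have hDi : ((pderiv i).toLinearMap : Module.End K (MvPolynomial (Fin n) K))
      * LinearMap.mulLeft K (X i)
      = LinearMap.mulLeft K (X i) * (pderiv i).toLinearMap + 1 := by
    apply LinearMap.ext; intro q
    simp only [Module.End.mul_apply, LinearMap.add_apply, Module.End.one_apply,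
      LinearMap.mulLeft_apply, Derivation.coeFn_coe, pderiv_mul, pderiv_X_self, one_mul]
    ring
  have hG := listG
    (fun j => ((pderiv j).toLinearMap : Module.End K (MvPolynomial (Fin n) K)) ^ γ j)
    i (LinearMap.mulLeft K (X i)) ((γ i) • (pderiv i).toLinearMap ^ (γ i - 1))
    (fun j hj => by
      have hc : Commute ((pderiv j).toLinearMap : Module.End K (MvPolynomial (Fin n) K))
          (LinearMap.mulLeft K (X i)) := by
        apply LinearMap.ext; intro q
        simp only [Module.End.mul_apply, LinearMap.mulLeft_apply, Derivation.coeFn_coe,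
          pderiv_mul, pderiv_X_of_ne (Ne.symm hj), zero_mul, zero_add]
      exact (hc.pow_left (γ j)).eq)
    (pow_comm_rule _ _ hDi (γ i))
  have hupd : Function.update
      (fun j => ((pderiv j).toLinearMap : Module.End K (MvPolynomial (Fin n) K)) ^ γ j)
      i ((pderiv i).toLinearMap ^ (γ i - 1))
      = fun j => ((pderiv j).toLinearMap : Module.End K (MvPolynomial (Fin n) K))
          ^ (Function.update γ i (γ i - 1) j) := by
    funext j
    by_cases hj : j = i
    · subst hj; rw [Function.update_self, Function.update_self]
    · rw [Function.update_of_ne hj, Function.update_of_ne hj]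
  rw [listS, hupd] at hG
  have := congrArg (fun A : Module.End K (MvPolynomial (Fin n) K) => A p) hG
  simpa only [pd, Module.End.mul_apply, LinearMap.add_apply, LinearMap.mulLeft_apply,
    LinearMap.smul_apply] using this

lemma matPow_comm_mem {n δ : ℕ} {R : Type*} [CommRing R]
    (M : Fin n → Matrix (Fin δ) (Fin δ) R) (C : Ideal R)
    (hC : ∀ i j a b, (M i * M j - M j * M i) a b ∈ C)
    (β : Fin n → ℕ) (i : Fin n) (a b : Fin δ) :
    (matPow M (Function.update β i (β i + 1)) - M i * matPow M β) a b ∈ C := by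
  classical
  set φ := Ideal.Quotient.mk C with hφ
  set Φ := φ.mapMatrix (m := Fin δ) with hΦ
  set Mq : Fin n → Matrix (Fin δ) (Fin δ) (R ⧸ C) := fun j => Φ (M j) with hMq
  have hmap : ∀ γ : Fin n → ℕ, Φ (matPow M γ) = matPow Mq γ := by
    intro γ
    rw [matPow, matPow, map_list_prod Φ, List.map_ofFn]
    refine congrArg List.prod (congrArg List.ofFn (funext fun j => ?_))
    simp [Function.comp, map_pow, hMq]
  have hcomm : ∀ j k, Commute (Mq j) (Mq k) := by
    intro j k
    have h0 : Φ (M j * M k - M k * M j) = 0 := by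
      ext a' b'
      simp only [hΦ, RingHom.mapMatrix_apply, Matrix.map_apply, Matrix.zero_apply]
      exact Ideal.Quotient.eq_zero_iff_mem.mpr (hC j k a' b')
    have := sub_eq_zero.mp (by rw [map_sub, map_mul, map_mul] at h0; exact h0)
    exact this
  have hkey : matPow Mq (Function.update β i (β i + 1)) = Mq i * matPow Mq β := by
    have hfn : (fun j => Mq j ^ (Function.update β i (β i + 1) j))
        = Function.update (fun j => Mq j ^ β j) i (Mq i * Mq i ^ β i) := by
      funext j
      by_cases hj : j = i
      · subst hj; rw [Function.update_self, Function.update_self, pow_succ']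
      · rw [Function.update_of_ne hj, Function.update_of_ne hj]
    rw [matPow, hfn, listP _ _ _ (fun j => (hcomm i j).pow_right (β j))]
    rfl
  rw [← Ideal.Quotient.eq_zero_iff_mem]
  have : Φ (matPow M (Function.update β i (β i + 1)) - M i * matPow M β) = 0 := by
    rw [map_sub, map_mul, hmap, hmap, hkey]
    simp [hMq]
  calc φ ((matPow M (Function.update β i (β i + 1)) - M i * matPow M β) a b)
      = Φ (matPow M (Function.update β i (β i + 1)) - M i * matPow M β) a b := rfl
    _ = 0 := by rw [this]; rfl

/-- Product rule for the parametric normal form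
`N_{z,μ}(p) = Σ_γ (1/γ!)∂^γ_z(p)·M(μ)^γ[1]`:
`N_{z,μ}(x_i·p) = x_i·N_{z,μ}(p) + M_i(μ)·N_{z,μ}(p) + O_{i,μ}(p)` where `O_{i,μ}` is
`K`-linear with values in the commutator ideal `C` generated by the entries of the
pairwise commutators `M_iM_j − M_jM_i`.
(The ring is `K[z,μ] = MvPolynomial (Fin n ⊕ Fin m) K` with `z`-variables `X (inl i)`
and `μ`-variables `X (inr j)`; the matrices have entries `0`, `1`, or `μ` variables,
i.e. are supported on the `μ`-variables, and `M^γ = 0` for `|γ| ≥ δ`.) -/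
theorem parametric_normal_form_mul_rule {n m δ : ℕ} (hδ : 0 < δ) {K : Type*} [Field K] [CharZero K]
    (M : Fin n → Matrix (Fin δ) (Fin δ) (MvPolynomial (Fin n ⊕ Fin m) K))
    (hsupp : ∀ i a b, M i a b ∈
      MvPolynomial.supported K (Set.range (Sum.inr : Fin m → Fin n ⊕ Fin m)))
    (hnil : ∀ γ : Fin n → ℕ, δ ≤ ∑ i, γ i → matPow M γ = 0)
    (Nf : MvPolynomial (Fin n) K → Fin δ → MvPolynomial (Fin n ⊕ Fin m) K)
    (hNf : ∀ p a, Nf p a =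
      ∑ γ ∈ Finset.Iic (fun _ : Fin n => δ),
        ((∏ i, ((γ i).factorial : K))⁻¹ •
          (MvPolynomial.rename Sum.inl (pd γ p) * matPow M γ a ⟨0, hδ⟩)))
    (C : Ideal (MvPolynomial (Fin n ⊕ Fin m) K))
    (hC : C = Ideal.span {r | ∃ i j a b, r = (M i * M j - M j * M i) a b})
    (i : Fin n) :
    ∃ O : MvPolynomial (Fin n) K →ₗ[K] (Fin δ → MvPolynomial (Fin n ⊕ Fin m) K),
      (∀ p a, O p a ∈ C) ∧
      (∀ p a, Nf (X i * p) a =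
        X (Sum.inl i) * Nf p a + ((M i).mulVec (Nf p)) a + O p a) := by
  classical
  -- abbreviations
  set S : Finset (Fin n → ℕ) := Finset.Iic (fun _ : Fin n => δ) with hSdef
  set z0 : Fin δ := ⟨0, hδ⟩ with hz0
  set c : (Fin n → ℕ) → K := fun γ => (∏ j, ((γ j).factorial : K))⁻¹ with hcdef
  set u : (Fin n → ℕ) → Fin n → ℕ := fun β => Function.update β i (β i + 1) with hudef
  set dn : (Fin n → ℕ) → Fin n → ℕ := fun γ => Function.update γ i (γ i - 1) with hdndef
  -- the entries of M^{β+e_i} - M_i M^β lie in C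
  have hgen : ∀ i' j' a b, (M i' * M j' - M j' * M i') a b ∈ C := by
    intro i' j' a b
    rw [hC]
    exact Ideal.subset_span ⟨i', j', a, b, rfl⟩
  have hmem : ∀ (β : Fin n → ℕ) (a b : Fin δ),
      (matPow M (u β) - M i * matPow M β) a b ∈ C := fun β a b =>
    matPow_comm_mem M C hgen β i a b
  -- coefficient identity
  have hcoef : ∀ β : Fin n → ℕ, c (u β) * ((β i : K) + 1) = c β := by
    intro β
    have hb : ((β i : K) + 1) ≠ 0 := Nat.cast_add_one_ne_zero (β i)
    have h1 : (fun j => (((u β) j).factorial : K))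
        = Function.update (fun j => ((β j).factorial : K)) i (((β i + 1).factorial : K)) := by
      funext j
      by_cases hj : j = i
      · subst hj; simp [hudef, Function.update_self]
      · simp [hudef, Function.update_of_ne hj]
    have h2 : ∏ j, (((u β) j).factorial : K)
        = ((β i + 1).factorial : K) * ∏ j ∈ Finset.univ \ {i}, ((β j).factorial : K) := by
      rw [h1, Finset.prod_update_of_mem (Finset.mem_univ i)]
    have h3 : ∏ j, ((β j).factorial : K)
        = ((β i).factorial : K) * ∏ j ∈ Finset.univ \ {i}, ((β j).factorial : K) := by
      rw [← Finset.erase_eq]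
      exact (Finset.mul_prod_erase Finset.univ _ (Finset.mem_univ i)).symm
    simp only [hcdef, h2, h3]
    rw [Nat.factorial_succ, Nat.cast_mul, Nat.cast_add, Nat.cast_one, mul_assoc, mul_inv,
      mul_comm, ← mul_assoc, mul_inv_cancel₀ hb, one_mul]
  -- define O
  refine ⟨{
    toFun := fun p a => ∑ β ∈ S,
      c β • (rename Sum.inl (pd β p) * ((matPow M (u β) - M i * matPow M β) a z0)),
    map_add' := by
      intro p q
      funext a
      simp only [map_add, add_mul, smul_add, Pi.add_apply, Finset.sum_add_distrib]
    map_smul' := by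
      intro k p
      funext a
      rw [RingHom.id_apply, Pi.smul_apply, Finset.smul_sum]
      refine Finset.sum_congr rfl fun β _ => ?_
      rw [LinearMap.map_smul, map_smul, smul_mul_assoc, smul_comm] }, ?_, ?_⟩
  · -- membership in C
    intro p a
    refine Ideal.sum_mem C fun β _ => ?_
    rw [MvPolynomial.smul_eq_C_mul]
    exact C.mul_mem_left _ (C.mul_mem_left _ (hmem β a z0))
  · -- main identity
    intro p a
    simp only [LinearMap.coe_mk, AddHom.coe_mk]
    -- split Nf (X i * p)
    have e1 : Nf (X i * p) a
        = (∑ γ ∈ S, c γ • (X (Sum.inl i) * (rename Sum.inl (pd γ p) * matPow M γ a z0)))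
        + ∑ γ ∈ S, (c γ * (γ i : K)) • (rename Sum.inl (pd (dn γ) p) * matPow M γ a z0) := by
      rw [hNf, ← Finset.sum_add_distrib]
      refine Finset.sum_congr rfl fun γ _ => ?_
      rw [pd_mul_X γ i p, map_add, map_mul, rename_X, map_nsmul, add_mul, smul_add,
        mul_assoc]
      congr 1
      rw [smul_mul_assoc, ← Nat.cast_smul_eq_nsmul K, smul_smul]
    -- first sum is X * Nf p
    have e2 : (∑ γ ∈ S, c γ • (X (Sum.inl i) * (rename Sum.inl (pd γ p) * matPow M γ a z0)))
        = X (Sum.inl i) * Nf p a := by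
      rw [hNf, Finset.mul_sum]
      exact Finset.sum_congr rfl fun γ _ => (mul_smul_comm _ _ _).symm
    -- reindexing of the second sum
    have e3 : (∑ γ ∈ S, (c γ * (γ i : K)) • (rename Sum.inl (pd (dn γ) p) * matPow M γ a z0))
        = ∑ β ∈ S, c β • (rename Sum.inl (pd β p) * matPow M (u β) a z0) := by
      have hf1 : ∑ γ ∈ S.filter (fun γ => γ i ≠ 0),
            (c γ * (γ i : K)) • (rename Sum.inl (pd (dn γ) p) * matPow M γ a z0)
          = ∑ γ ∈ S, (c γ * (γ i : K)) • (rename Sum.inl (pd (dn γ) p) * matPow M γ a z0) := by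
        refine Finset.sum_filter_of_ne fun γ _ hne => ?_
        intro h0
        apply hne
        rw [h0]
        simp
      have hf2 : ∑ β ∈ S.filter (fun β => β i ≠ δ),
            c β • (rename Sum.inl (pd β p) * matPow M (u β) a z0)
          = ∑ β ∈ S, c β • (rename Sum.inl (pd β p) * matPow M (u β) a z0) := by
        refine Finset.sum_filter_of_ne fun β _ hne => ?_
        intro h0
        apply hne
        have hz : matPow M (u β) = 0 := by
          refine hnil (u β) ?_
          have h1 : δ + 1 ≤ ∑ j, u β j := by
            have : u β i = δ + 1 := by simp [hudef, Function.update_self, h0]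
            calc δ + 1 = u β i := this.symm
              _ ≤ ∑ j, u β j :=
                Finset.single_le_sum (fun _ _ => Nat.zero_le _) (Finset.mem_univ i)
          omega
        rw [hz]
        simp
      rw [← hf1, ← hf2]
      refine (Finset.sum_nbij' u dn ?_ ?_ ?_ ?_ ?_).symm
      · intro β hβ
        rw [Finset.mem_filter] at hβ ⊢
        obtain ⟨hβS, hβi⟩ := hβ
        rw [hSdef, Finset.mem_Iic] at hβS ⊢
        constructor
        · intro j
          by_cases hj : j = i
          · rw [hj]
            have hle : β i ≤ δ := hβS i
            simp only [hudef, Function.update_self]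
            omega
          · simp only [hudef, Function.update_of_ne hj]
            exact hβS j
        · simp [hudef, Function.update_self]
      · intro γ hγ
        rw [Finset.mem_filter] at hγ ⊢
        obtain ⟨hγS, hγi⟩ := hγ
        rw [hSdef, Finset.mem_Iic] at hγS ⊢
        constructor
        · intro j
          by_cases hj : j = i
          · rw [hj]
            have hle : γ i ≤ δ := hγS i
            simp only [hdndef, Function.update_self]
            omega
          · simp only [hdndef, Function.update_of_ne hj]
            exact hγS j
        · have h1 : γ i ≤ δ := hγS i
          simp only [hdndef, Function.update_self]
          omega
      · intro β hβ
        funext j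
        by_cases hj : j = i
        · rw [hj]
          simp [hudef, hdndef, Function.update_self]
        · simp [hudef, hdndef, Function.update_of_ne hj]
      · intro γ hγ
        rw [Finset.mem_filter] at hγ
        obtain ⟨-, hγi⟩ := hγ
        funext j
        by_cases hj : j = i
        · rw [hj]
          simp only [hudef, hdndef, Function.update_self]
          omega
        · simp [hudef, hdndef, Function.update_of_ne hj]
      · intro β hβ
        have hdu : dn (u β) = β := by
          funext j
          by_cases hj : j = i
          · subst hj
            simp [hudef, hdndef, Function.update_self]
          · simp [hudef, hdndef, Function.update_of_ne hj]
        have hui : ((u β i : ℕ) : K) = (β i : K) + 1 := by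
          simp [hudef, Function.update_self]
        rw [hdu, hui, hcoef β]
    -- mulVec
    have e4 : ((M i).mulVec (Nf p)) a
        = ∑ β ∈ S, c β • (rename Sum.inl (pd β p) * (M i * matPow M β) a z0) := by
      rw [Matrix.mulVec, dotProduct]
      have : ∀ b : Fin δ, M i a b * Nf p b
          = ∑ β ∈ S, c β • (rename Sum.inl (pd β p) * (M i a b * matPow M β b z0)) := by
        intro b
        rw [hNf, Finset.mul_sum]
        refine Finset.sum_congr rfl fun β _ => ?_
        rw [mul_smul_comm]
        ring_nf
        rfl
      rw [Finset.sum_congr rfl fun b _ => this b, Finset.sum_comm]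
      refine Finset.sum_congr rfl fun β _ => ?_
      rw [Matrix.mul_apply, ← Finset.smul_sum, ← Finset.mul_sum]
    -- split O
    have e5 : (∑ β ∈ S,
          c β • (rename Sum.inl (pd β p) * ((matPow M (u β) - M i * matPow M β) a z0)))
        = (∑ β ∈ S, c β • (rename Sum.inl (pd β p) * matPow M (u β) a z0))
        - ∑ β ∈ S, c β • (rename Sum.inl (pd β p) * (M i * matPow M β) a z0) := by
      rw [← Finset.sum_sub_distrib]
      refine Finset.sum_congr rfl fun β _ => ?_
      rw [Matrix.sub_apply, mul_sub, smul_sub]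
    rw [e1, e2, e3, e4, e5]
    ring
end
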